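/- arXiv:0908.3628 — 2 statements merged into one kernel-verified Lean document; each statement's English description precedes it below -/
import Mathlib

section
/- The type A Stanley symmetric function G_ω(Y) = ⟨A_1(y_1)A_1(y_2)···, ω⟩ is a symmetric function in the variables Y = (y_1, y_2, ...); that is, for any number m of variables, ⟨A_1(y_1)···A_1(y_m), ω⟩ is a symmetric polynomial in y_1,...,y_m. -/
open Equiv

attribute [local instance] Classical.propDecidable

noncomputable section

namespace Giambelli

/-- The simple reflection `s_i` of the (infinite) hyperoctahedral group, realized
inside `Equiv.Perm ℤ`: `s_0` is the sign change of the first entry, and `s_i`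
(`i ≥ 1`) swaps the entries in positions `i` and `i+1`. -/
def wS (i : ℕ) : Equiv.Perm ℤ :=
  if i = 0 then Equiv.swap 1 (-1)
  else Equiv.swap (i : ℤ) ((i : ℤ) + 1) * Equiv.swap (-(i : ℤ)) (-((i : ℤ) + 1))

/-- `f` is a signed permutation: `f(-i) = -f(i)`. -/
def IsOddPerm (f : Equiv.Perm ℤ) : Prop := ∀ i : ℤ, f (-i) = - f i

/-- `f` moves only entries of absolute value at most `n`. -/
def SuppLe (n : ℕ) (f : Equiv.Perm ℤ) : Prop := ∀ i : ℤ, (n : ℤ) < |i| → f i = i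

/-- Membership in the hyperoctahedral group `W_n`. -/
def InWn (n : ℕ) (f : Equiv.Perm ℤ) : Prop := IsOddPerm f ∧ SuppLe n f

/-- Membership in `W_∞ = ∪_n W_n`. -/
def InWinf (f : Equiv.Perm ℤ) : Prop := IsOddPerm f ∧ ∃ n : ℕ, SuppLe n f

/-- The Coxeter length: the least length of a word in the `s_i` representing `f`. -/
def len (f : Equiv.Perm ℤ) : ℕ :=
  sInf {m : ℕ | ∃ l : List ℕ, l.length = m ∧ (l.map wS).prod = f}

/-- `f` has a descent at position `p ≥ 0`, where by convention `w_0 = 0`. -/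
def Descent (f : Equiv.Perm ℤ) (p : ℕ) : Prop :=
  f ((p : ℤ) + 1) < (if p = 0 then 0 else f (p : ℤ))

/-- `f` is increasing up to `k`: it has no descent at any position `< k`. -/
def IncUpTo (k : ℕ) (f : Equiv.Perm ℤ) : Prop := ∀ p : ℕ, p < k → ¬ Descent f p

/-- `f` is `k`-Grassmannian: `ℓ(f s_i) = ℓ(f) + 1` for all `i ≠ k`. -/
def kGrass (k : ℕ) (f : Equiv.Perm ℤ) : Prop :=
  ∀ i : ℕ, i ≠ k → len (f * wS i) = len f + 1

/-- The reflection `t_{ij}`, swapping the entries in positions `i` and `j`. -/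
def tt (i j : ℕ) : Equiv.Perm ℤ :=
  Equiv.swap (i : ℤ) (j : ℤ) * Equiv.swap (-(i : ℤ)) (-(j : ℤ))

/-- The reflection `t̄_{ij}`, swapping and negating the entries in positions `i`,`j`
    (negating the entry in position `i` when `i = j`). -/
def tb (i j : ℕ) : Equiv.Perm ℤ :=
  if i = j then Equiv.swap (i : ℤ) (-(i : ℤ))
  else Equiv.swap (i : ℤ) (-(j : ℤ)) * Equiv.swap (j : ℤ) (-(i : ℤ))

/-- The transition set `Φ(w) = Φ₁(w) ∪ Φ₂(w)` attached to `w` with last descent `r`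
and `s` maximal such that `w_s < w_r`. -/
def Phi (w : Equiv.Perm ℤ) (r s : ℕ) : Set (Equiv.Perm ℤ) :=
  {v | ∃ i : ℕ, 1 ≤ i ∧ i < r ∧ len (w * tt r s * tt i r) = len w ∧ v = w * tt r s * tt i r} ∪
  {v | ∃ i : ℕ, 1 ≤ i ∧ len (w * tt r s * tb i r) = len w ∧ v = w * tt r s * tb i r}

/-- The last descent position of `f`. -/
def lastDescent (f : Equiv.Perm ℤ) : ℕ := sSup {p : ℕ | Descent f p}

/-- `max { i > r | w_i < w_r }`. -/
def maxS (f : Equiv.Perm ℤ) (r : ℕ) : ℕ := sSup {i : ℕ | r < i ∧ f (i : ℤ) < f (r : ℤ)}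

/-- A terminal node of the `k`-transition tree: `w = 1` or the last descent of `w` is `k`. -/
def Terminal (k : ℕ) (w : Equiv.Perm ℤ) : Prop := w = 1 ∨ lastDescent w = k

/-- The edge (parent-to-child) relation of the `k`-transition tree `T^k`. -/
def StepT (k : ℕ) (w v : Equiv.Perm ℤ) : Prop :=
  ¬ Terminal k w ∧ v ∈ Phi w (lastDescent w) (maxS w (lastDescent w))

/-- The defining relations of the nilCoxeter algebra of the hyperoctahedral group `W_n`. -/
inductive NCRel (n : ℕ) : FreeAlgebra ℤ (Fin n) → FreeAlgebra ℤ (Fin n) → Prop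
  | sq (i : Fin n) : NCRel n (FreeAlgebra.ι ℤ i * FreeAlgebra.ι ℤ i) 0
  | comm (i j : Fin n) (h : i.val + 2 ≤ j.val) :
      NCRel n (FreeAlgebra.ι ℤ i * FreeAlgebra.ι ℤ j) (FreeAlgebra.ι ℤ j * FreeAlgebra.ι ℤ i)
  | braid (i j : Fin n) (h1 : 1 ≤ i.val) (h2 : j.val = i.val + 1) :
      NCRel n (FreeAlgebra.ι ℤ i * FreeAlgebra.ι ℤ j * FreeAlgebra.ι ℤ i)
              (FreeAlgebra.ι ℤ j * FreeAlgebra.ι ℤ i * FreeAlgebra.ι ℤ j)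
  | bzero (i j : Fin n) (h0 : i.val = 0) (h1 : j.val = 1) :
      NCRel n (FreeAlgebra.ι ℤ i * FreeAlgebra.ι ℤ j * FreeAlgebra.ι ℤ i * FreeAlgebra.ι ℤ j)
              (FreeAlgebra.ι ℤ j * FreeAlgebra.ι ℤ i * FreeAlgebra.ι ℤ j * FreeAlgebra.ι ℤ i)

/-- The nilCoxeter algebra of `W_n`. -/
abbrev NC (n : ℕ) := RingQuot (NCRel n)

/-- The generator `u_i` of the nilCoxeter algebra (and `0` for `i ≥ n`). -/
def NCgen (n : ℕ) (i : ℕ) : NC n :=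
  if h : i < n then RingQuot.mkAlgHom ℤ (NCRel n) (FreeAlgebra.ι ℤ (⟨i, h⟩ : Fin n)) else 0

/-- The hyperoctahedral group `W_n` as a type. -/
abbrev WnSub (n : ℕ) := {f : Equiv.Perm ℤ // InWn n f}

/-- `l` is a reduced word for `f` (letters in `{0,...,n-1}`). -/
def ReducedWordN (n : ℕ) (f : Equiv.Perm ℤ) (l : List ℕ) : Prop :=
  (∀ a ∈ l, a < n) ∧ (l.map wS).prod = f ∧
    ∀ l' : List ℕ, (∀ a ∈ l', a < n) → (l'.map wS).prod = f → l.length ≤ l'.length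

/-- `C(a) = (1+a u_{n-1})⋯(1+a u_1)(1+2a u_0)(1+a u_1)⋯(1+a u_{n-1})` with scalar `a`. -/
def Celt (n : ℕ) (a : ℤ) : NC n :=
  (((List.range (n - 1)).map fun j => 1 + algebraMap ℤ (NC n) a * NCgen n (n - 1 - j)).prod) *
    (1 + algebraMap ℤ (NC n) (2 * a) * NCgen n 0) *
  (((List.range (n - 1)).map fun j => 1 + algebraMap ℤ (NC n) a * NCgen n (j + 1)).prod)

/-- `A_1(a) = (1+a u_{n-1})(1+a u_{n-2})⋯(1+a u_1)` with scalar `a`. -/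
def A1elt (n : ℕ) (a : ℤ) : NC n :=
  ((List.range (n - 1)).map fun j => 1 + algebraMap ℤ (NC n) a * NCgen n (n - 1 - j)).prod

/-! ### Auxiliary lemmas for Statement 6 -/

section StanleyAux

variable {R : Type*} [Ring R]

private lemma aux_sq (u : R) (hu : u * u = 0) (a b : ℤ) :
    (1 + a • u) * (1 + b • u) = 1 + (a + b) • u := by
  simp only [mul_add, add_mul, mul_one, one_mul, smul_mul_assoc, mul_smul_comm, hu, smul_zero]
  module

private lemma aux_ybe (u v : R) (hu : u * u = 0) (hv : v * v = 0)
    (hb : u * v * u = v * u * v) (a b : ℤ) :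
    (1 + a • u) * (1 + (a + b) • v) * (1 + b • u)
      = (1 + b • v) * (1 + (a + b) • u) * (1 + a • v) := by
  simp only [mul_add, add_mul, mul_one, one_mul, smul_mul_assoc, mul_smul_comm, hu, hv,
    smul_zero, ← mul_assoc, hb]
  module

variable {n : ℕ}

lemma NCgen_sq (n i : ℕ) : NCgen n i * NCgen n i = 0 := by
  by_cases h : i < n
  · simp only [NCgen, dif_pos h, ← map_mul]
    exact (RingQuot.mkAlgHom_rel ℤ (NCRel.sq ⟨i, h⟩)).trans (map_zero _)
  · simp [NCgen, h]

lemma NCgen_commute {i j : ℕ} (h : i + 2 ≤ j) : Commute (NCgen n i) (NCgen n j) := by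
  by_cases hj : j < n
  · have hi : i < n := by omega
    simp only [NCgen, dif_pos hi, dif_pos hj]
    show _ = _
    rw [← map_mul, ← map_mul]
    exact RingQuot.mkAlgHom_rel ℤ (NCRel.comm ⟨i, hi⟩ ⟨j, hj⟩ h)
  · simp only [NCgen, dif_neg hj]
    exact Commute.zero_right _

lemma NCgen_braid {i : ℕ} (h1 : 1 ≤ i) :
    NCgen n i * NCgen n (i + 1) * NCgen n i
      = NCgen n (i + 1) * NCgen n i * NCgen n (i + 1) := by
  by_cases h2 : i + 1 < n
  · have hi : i < n := by omega
    simp only [NCgen, dif_pos hi, dif_pos h2, ← map_mul]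
    exact RingQuot.mkAlgHom_rel ℤ (NCRel.braid ⟨i, hi⟩ ⟨i + 1, h2⟩ h1 rfl)
  · simp [NCgen, h2]

/-- `h_i(a) = 1 + a u_i`. -/
def hh (n i : ℕ) (a : ℤ) : NC n := 1 + a • NCgen n i

lemma hh_mul (i : ℕ) (a b : ℤ) : hh n i a * hh n i b = hh n i (a + b) :=
  aux_sq _ (NCgen_sq n i) a b

lemma hh_zero (i : ℕ) : hh n i 0 = 1 := by simp [hh]

lemma hh_inv (i : ℕ) (a : ℤ) : hh n i a * hh n i (-a) = 1 := by
  rw [hh_mul, add_neg_cancel, hh_zero]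

lemma hh_ybe {i : ℕ} (h1 : 1 ≤ i) (a b : ℤ) :
    hh n i a * hh n (i + 1) (a + b) * hh n i b
      = hh n (i + 1) b * hh n i (a + b) * hh n (i + 1) a :=
  aux_ybe _ _ (NCgen_sq n i) (NCgen_sq n (i + 1)) (NCgen_braid h1) a b

lemma hh_commute {i j : ℕ} (h : i + 2 ≤ j) (a b : ℤ) :
    Commute (hh n j b) (hh n i a) := by
  have c : Commute (NCgen n j) (NCgen n i) := (NCgen_commute h).symm
  exact (Commute.one_right _).add_right
    ((Commute.one_left _).add_left ((c.smul_left b).smul_right a))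

/-- `A_k(a) = h_k(a) h_{k-1}(a) ⋯ h_1(a)`. -/
def AA (n : ℕ) : ℕ → ℤ → NC n
  | 0, _ => 1
  | k + 1, a => hh n (k + 1) a * AA n k a

/-- `L_k(a) = h_1(a) h_2(a) ⋯ h_k(a)`. -/
def LL (n : ℕ) : ℕ → ℤ → NC n
  | 0, _ => 1
  | k + 1, a => LL n k a * hh n (k + 1) a

lemma commute_hh_AA (j k : ℕ) (a b : ℤ) (hk : k + 2 ≤ j) :
    Commute (hh n j b) (AA n k a) := by
  induction k with
  | zero => exact Commute.one_right _
  | succ k ih =>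
      exact (hh_commute hk a b).mul_right (ih (by omega))

lemma commute_hh_LL (j k : ℕ) (a b : ℤ) (hk : k + 2 ≤ j) :
    Commute (hh n j b) (LL n k a) := by
  induction k with
  | zero => exact Commute.one_right _
  | succ k ih =>
      exact (ih (by omega)).mul_right (hh_commute hk a b)

lemma AA_mul_LL (k : ℕ) (a : ℤ) : AA n k a * LL n k (-a) = 1 := by
  induction k with
  | zero => simp [AA, LL]
  | succ k ih =>
      show hh n (k + 1) a * AA n k a * (LL n k (-a) * hh n (k + 1) (-a)) = 1
      rw [mul_assoc, ← mul_assoc (AA n k a), ih, one_mul, hh_inv]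

lemma LL_mul_AA (k : ℕ) (a : ℤ) : LL n k (-a) * AA n k a = 1 := by
  induction k with
  | zero => simp [AA, LL]
  | succ k ih =>
      show LL n k (-a) * hh n (k + 1) (-a) * (hh n (k + 1) a * AA n k a) = 1
      rw [mul_assoc, ← mul_assoc (hh n (k + 1) (-a)), hh_mul, neg_add_cancel, hh_zero,
        one_mul, ih]

lemma TT_step (x y : ℤ) (k : ℕ) :
    LL n k (-y) * hh n (k + 1) (x - y) * AA n k x
      = AA n (k + 1) x * LL n (k + 1) (-y) := by
  induction k with
  | zero =>
      show (1 : NC n) * hh n 1 (x - y) * 1 = hh n 1 x * 1 * (1 * hh n 1 (-y))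
      rw [one_mul, mul_one, mul_one, one_mul, hh_mul, ← sub_eq_add_neg]
  | succ k ih =>
      have hy3 : ∀ z : NC n,
          hh n (k + 1) (-y) * (hh n (k + 2) (-y + x) * (hh n (k + 1) x * z))
            = hh n (k + 2) x * (hh n (k + 1) (-y + x) * (hh n (k + 2) (-y) * z)) := by
        intro z
        simp only [← mul_assoc]
        rw [hh_ybe (Nat.le_add_left 1 k)]
      have c1 := (commute_hh_LL (n := n) (k + 2) k (-y) x (by omega)).eq
      have c2 := (commute_hh_AA (n := n) (k + 2) k x (-y) (by omega)).eq
      calc LL n (k + 1) (-y) * hh n (k + 2) (x - y) * AA n (k + 1) x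
          = LL n k (-y) * (hh n (k + 1) (-y) * (hh n (k + 2) (-y + x)
              * (hh n (k + 1) x * AA n k x))) := by
            rw [neg_add_eq_sub]
            show LL n k (-y) * hh n (k + 1) (-y) * hh n (k + 2) (x - y)
                * (hh n (k + 1) x * AA n k x) = _
            simp only [mul_assoc]
        _ = LL n k (-y) * (hh n (k + 2) x * (hh n (k + 1) (-y + x)
              * (hh n (k + 2) (-y) * AA n k x))) := by rw [hy3]
        _ = hh n (k + 2) x * (LL n k (-y) * (hh n (k + 1) (-y + x)
              * (AA n k x * hh n (k + 2) (-y)))) := by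
            rw [c2, ← mul_assoc (LL n k (-y)), ← c1]
            simp only [mul_assoc]
        _ = hh n (k + 2) x * ((LL n k (-y) * hh n (k + 1) (x - y) * AA n k x)
              * hh n (k + 2) (-y)) := by
            rw [neg_add_eq_sub]
            simp only [mul_assoc]
        _ = hh n (k + 2) x * (AA n (k + 1) x * LL n (k + 1) (-y) * hh n (k + 2) (-y)) := by
            rw [ih]
        _ = AA n (k + 2) x * LL n (k + 2) (-y) := by
            show _ = hh n (k + 2) x * AA n (k + 1) x * (LL n (k + 1) (-y) * hh n (k + 2) (-y))
            simp only [mul_assoc]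

lemma LL_AA_comm (x y : ℤ) (k : ℕ) :
    LL n k (-y) * AA n k x = AA n k x * LL n k (-y) := by
  cases k with
  | zero => simp [AA, LL]
  | succ k =>
      have : LL n k (-y) * hh n (k + 1) (-y) * (hh n (k + 1) x * AA n k x)
          = LL n k (-y) * hh n (k + 1) (x - y) * AA n k x := by
        rw [mul_assoc, ← mul_assoc (hh n (k + 1) (-y)), hh_mul, neg_add_eq_sub,
          ← mul_assoc]
      show LL n k (-y) * hh n (k + 1) (-y) * (hh n (k + 1) x * AA n k x) = _
      rw [this, TT_step]

lemma AA_comm (x y : ℤ) (k : ℕ) :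
    AA n k x * AA n k y = AA n k y * AA n k x := by
  have h1 := LL_AA_comm x y (n := n) k
  calc AA n k x * AA n k y
      = AA n k y * LL n k (-y) * AA n k x * AA n k y := by rw [AA_mul_LL, one_mul]
    _ = AA n k y * (LL n k (-y) * AA n k x) * AA n k y := by rw [mul_assoc (AA n k y)]
    _ = AA n k y * (AA n k x * LL n k (-y)) * AA n k y := by rw [h1]
    _ = AA n k y * AA n k x * (LL n k (-y) * AA n k y) := by
        simp only [mul_assoc]
    _ = AA n k y * AA n k x := by rw [LL_mul_AA, mul_one]

lemma one_add_eq_hh (i : ℕ) (a : ℤ) :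
    (1 : NC n) + algebraMap ℤ (NC n) a * NCgen n i = hh n i a := by
  rw [hh, eq_intCast (algebraMap ℤ (NC n)) a]
  norm_num [zsmul_eq_mul]

lemma range_prod_eq_AA (a : ℤ) : ∀ N : ℕ,
    ((List.range N).map fun j => (1 : NC n) + algebraMap ℤ (NC n) a * NCgen n (N - j)).prod
      = AA n N a := by
  intro N
  induction N with
  | zero => simp [AA]
  | succ N ih =>
      rw [List.range_succ_eq_map]
      simp only [List.map_cons, List.map_map, List.prod_cons, Nat.sub_zero]
      rw [one_add_eq_hh]
      show hh n (N + 1) a * ((List.range N).map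
        ((fun j => (1 : NC n) + algebraMap ℤ (NC n) a * NCgen n (N + 1 - j)) ∘ (· + 1))).prod
          = AA n (N + 1) a
      have : ((fun j => (1 : NC n) + algebraMap ℤ (NC n) a * NCgen n (N + 1 - j)) ∘ (· + 1))
          = fun j => (1 : NC n) + algebraMap ℤ (NC n) a * NCgen n (N - j) := by
        funext j
        simp [Nat.succ_sub_succ]
      rw [this, ih]
      rfl

lemma A1elt_eq_AA (a : ℤ) : A1elt n a = AA n (n - 1) a :=
  range_prod_eq_AA a (n - 1)

lemma A1elt_comm (a b : ℤ) : Commute (A1elt n a) (A1elt n b) := by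
  rw [A1elt_eq_AA, A1elt_eq_AA]
  exact AA_comm a b (n - 1)

private lemma pairwise_of_forall_rel {α : Type*} {Rl : α → α → Prop}
    (h : ∀ a b, Rl a b) : ∀ l : List α, l.Pairwise Rl := by
  intro l
  induction l with
  | nil => exact List.Pairwise.nil
  | cons a t ih => exact List.Pairwise.cons (fun b _ => h a b) ih

end StanleyAux

/-!
STATEMENT 6: The type A Stanley symmetric function
`G_ω(Y) = ⟨A_1(y_1) A_1(y_2) ⋯, ω⟩` is symmetric in the variables `Y`: for any
number `m` of variables, the coefficient of `u_ω` in `A_1(y_1) ⋯ A_1(y_m)` is a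
symmetric polynomial in `y_1, ..., y_m` (here evaluated at arbitrary integer
values of the variables, which determines the polynomial, and permuted by an
arbitrary permutation `τ`).  `ω` is a permutation without sign changes.
-/

theorem stanleyA_symmetric (n : ℕ)
    (U : WnSub n → NC n) (B : Module.Basis (WnSub n) ℤ (NC n))
    (hU : ∀ (w : WnSub n) (l : List ℕ), ReducedWordN n w.1 l →
      (l.map (NCgen n)).prod = U w)
    (hB : ∀ w : WnSub n, B w = U w)
    (ω : WnSub n) (hω : ∀ i : ℤ, 0 < i → 0 < ω.1 i)
    (m : ℕ) (x : Fin m → ℤ) (τ : Equiv.Perm (Fin m)) :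
    B.repr ((List.ofFn fun i => A1elt n (x i)).prod) ω =
      B.repr ((List.ofFn fun i => A1elt n (x (τ i))).prod) ω := by
  have hperm : ((List.finRange m).map ⇑τ).Perm (List.finRange m) := by
    refine List.perm_iff_count.2 fun a => ?_
    have h1 : List.count a (List.finRange m) = 1 :=
      List.count_eq_one_of_mem (List.nodup_finRange m) (List.mem_finRange a)
    have h2 : List.count (τ.symm a) (List.finRange m) = 1 :=
      List.count_eq_one_of_mem (List.nodup_finRange m) (List.mem_finRange _)
    calc List.count a ((List.finRange m).map ⇑τ)
        = List.count (τ (τ.symm a)) ((List.finRange m).map ⇑τ) := by rw [Equiv.apply_symm_apply]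
      _ = List.count (τ.symm a) (List.finRange m) :=
          List.count_map_of_injective _ _ τ.injective _
      _ = List.count a (List.finRange m) := by rw [h2, h1]
  have hpw : ((List.finRange m).map fun i => A1elt n (x i)).Pairwise Commute :=
    pairwise_of_forall_rel (fun a b => A1elt_comm _ _) _ |>.map _
      (fun a b h => h)
  have hprod : (List.ofFn fun i => A1elt n (x i)).prod
      = (List.ofFn fun i => A1elt n (x (τ i))).prod := by
    rw [List.ofFn_eq_map, List.ofFn_eq_map]
    have : (fun i => A1elt n (x (τ i))) = (fun i => A1elt n (x i)) ∘ ⇑τ := rfl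
    rw [this, ← List.map_map]
    exact (hperm.map fun i => A1elt n (x i)).symm.prod_eq' hpw
  rw [hprod]

end Giambelli
end
end

section
/- For w ∈ W_∞ increasing up to k and not k-Grassmannian, with last descent r > k and s maximal such that w_s < w_r, the set Φ(w) = Φ_1(w) ∪ Φ_2(w) is nonempty, where Φ_1(w) = {w t_{rs} t_{ir} : 1 ≤ i < r, ℓ(w t_{rs} t_{ir}) = ℓ(w)} and Φ_2(w) = {w t_{rs} t̄_{ir} : i ≥ 1, ℓ(w t_{rs} t̄_{ir}) = ℓ(w)}. -/
open Equiv

attribute [local instance] Classical.propDecidable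

set_option linter.unreachableTactic false
set_option linter.unusedTactic false
set_option linter.unusedVariables false
set_option maxHeartbeats 1000000

noncomputable section

namespace Giambelli

/-!
STATEMENT 9: For `w ∈ W_∞` increasing up to `k` and not `k`-Grassmannian, with
last descent `r > k` and `s` maximal such that `w_s < w_r`, the transition set
`Φ(w) = Φ₁(w) ∪ Φ₂(w)` is nonempty.
-/

lemma wS_apply_pos (t : ℕ) (ht : t ≠ 0) (x : ℤ) :
    wS t x = if x = (t:ℤ) then (t:ℤ)+1 else if x = (t:ℤ)+1 then t
      else if x = -(t:ℤ) then -((t:ℤ)+1) else if x = -((t:ℤ)+1) then -(t:ℤ) else x := by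
  have ht1 : (1:ℤ) ≤ (t:ℤ) := by exact_mod_cast Nat.one_le_iff_ne_zero.mpr ht
  unfold wS
  rw [if_neg ht, Equiv.Perm.mul_apply, Equiv.swap_apply_def, Equiv.swap_apply_def]
  split_ifs <;> first | omega | simp_all

lemma wS_apply_zero (x : ℤ) :
    wS 0 x = if x = 1 then -1 else if x = -1 then 1 else x := by
  unfold wS
  rw [if_pos rfl, Equiv.swap_apply_def]

lemma tt_apply (p q : ℕ) (hp : p ≠ 0) (hq : q ≠ 0) (hpq : p ≠ q) (x : ℤ) :
    tt p q x = if x = (p:ℤ) then (q:ℤ) else if x = (q:ℤ) then p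
      else if x = -(p:ℤ) then -(q:ℤ) else if x = -(q:ℤ) then -(p:ℤ) else x := by
  have hp1 : (1:ℤ) ≤ (p:ℤ) := by exact_mod_cast Nat.one_le_iff_ne_zero.mpr hp
  have hq1 : (1:ℤ) ≤ (q:ℤ) := by exact_mod_cast Nat.one_le_iff_ne_zero.mpr hq
  have hpq' : (p:ℤ) ≠ (q:ℤ) := by exact_mod_cast hpq
  unfold tt
  rw [Equiv.Perm.mul_apply, Equiv.swap_apply_def, Equiv.swap_apply_def]
  split_ifs <;> first | omega | simp_all

lemma tb_apply_ne (p q : ℕ) (hp : p ≠ 0) (hq : q ≠ 0) (hpq : p ≠ q) (x : ℤ) :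
    tb p q x = if x = (p:ℤ) then -(q:ℤ) else if x = -(q:ℤ) then p
      else if x = (q:ℤ) then -(p:ℤ) else if x = -(p:ℤ) then (q:ℤ) else x := by
  have hp1 : (1:ℤ) ≤ (p:ℤ) := by exact_mod_cast Nat.one_le_iff_ne_zero.mpr hp
  have hq1 : (1:ℤ) ≤ (q:ℤ) := by exact_mod_cast Nat.one_le_iff_ne_zero.mpr hq
  have hpq' : (p:ℤ) ≠ (q:ℤ) := by exact_mod_cast hpq
  unfold tb
  rw [if_neg hpq, Equiv.Perm.mul_apply, Equiv.swap_apply_def, Equiv.swap_apply_def]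
  split_ifs <;> first | omega | simp_all

lemma tb_apply_eq (r : ℕ) (x : ℤ) :
    tb r r x = if x = (r:ℤ) then -(r:ℤ) else if x = -(r:ℤ) then (r:ℤ) else x := by
  unfold tb
  rw [if_pos rfl, Equiv.swap_apply_def]


lemma wS_odd (t : ℕ) : IsOddPerm (wS t) := by
  intro i
  rcases Nat.eq_zero_or_pos t with h | h
  · subst h; rw [wS_apply_zero, wS_apply_zero]; split_ifs <;> first | omega | simp_all
  · have ht : t ≠ 0 := by omega
    rw [wS_apply_pos t ht, wS_apply_pos t ht]
    have ht1 : (1:ℤ) ≤ (t:ℤ) := by exact_mod_cast h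
    split_ifs <;> first | omega | simp_all

lemma wS_invol (t : ℕ) : wS t * wS t = 1 := by
  ext x
  rw [Equiv.Perm.mul_apply, Equiv.Perm.one_apply]
  rcases Nat.eq_zero_or_pos t with h | h
  · subst h; rw [wS_apply_zero, wS_apply_zero]; split_ifs <;> first | omega | simp_all
  · have ht : t ≠ 0 := by omega
    have ht1 : (1:ℤ) ≤ (t:ℤ) := by exact_mod_cast h
    rw [wS_apply_pos t ht, wS_apply_pos t ht]
    split_ifs <;> first | omega | simp_all

lemma wS_supp (t : ℕ) : SuppLe (t+1) (wS t) := by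
  intro i hi
  rcases Nat.eq_zero_or_pos t with h | h
  · subst h; rw [wS_apply_zero]; simp only [Nat.cast_add] at hi
    rcases abs_cases i with ⟨h1,h2⟩|⟨h1,h2⟩ <;> split_ifs <;> first | omega | simp_all
  · have ht : t ≠ 0 := by omega
    have ht1 : (1:ℤ) ≤ (t:ℤ) := by exact_mod_cast h
    rw [wS_apply_pos t ht]
    push_cast at hi
    rcases abs_cases i with ⟨h1,h2⟩|⟨h1,h2⟩ <;> split_ifs <;> first | omega | simp_all

lemma tt_odd (p q : ℕ) (hp : p ≠ 0) (hq : q ≠ 0) (hpq : p ≠ q) : IsOddPerm (tt p q) := by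
  intro i
  rw [tt_apply p q hp hq hpq, tt_apply p q hp hq hpq]
  have hp1 : (1:ℤ) ≤ (p:ℤ) := by exact_mod_cast Nat.one_le_iff_ne_zero.mpr hp
  have hq1 : (1:ℤ) ≤ (q:ℤ) := by exact_mod_cast Nat.one_le_iff_ne_zero.mpr hq
  have hpq' : (p:ℤ) ≠ (q:ℤ) := by exact_mod_cast hpq
  split_ifs <;> first | omega | simp_all

lemma tt_invol (p q : ℕ) (hp : p ≠ 0) (hq : q ≠ 0) (hpq : p ≠ q) : tt p q * tt p q = 1 := by
  ext x
  rw [Equiv.Perm.mul_apply, Equiv.Perm.one_apply, tt_apply p q hp hq hpq,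
    tt_apply p q hp hq hpq]
  have hp1 : (1:ℤ) ≤ (p:ℤ) := by exact_mod_cast Nat.one_le_iff_ne_zero.mpr hp
  have hq1 : (1:ℤ) ≤ (q:ℤ) := by exact_mod_cast Nat.one_le_iff_ne_zero.mpr hq
  have hpq' : (p:ℤ) ≠ (q:ℤ) := by exact_mod_cast hpq
  split_ifs <;> first | omega | simp_all

lemma tt_supp (p q : ℕ) (hp : p ≠ 0) (hq : q ≠ 0) (hpq : p ≠ q) :
    SuppLe (max p q) (tt p q) := by
  intro i hi
  rw [tt_apply p q hp hq hpq]
  have : ((max p q : ℕ) : ℤ) = max (p:ℤ) (q:ℤ) := by push_cast; rfl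
  rw [this] at hi
  rcases abs_cases i with ⟨h1,h2⟩|⟨h1,h2⟩ <;> split_ifs <;> first | omega | simp_all

lemma tb_odd (p q : ℕ) (hp : p ≠ 0) (hq : q ≠ 0) : IsOddPerm (tb p q) := by
  intro i
  rcases eq_or_ne p q with h | h
  · subst h; rw [tb_apply_eq, tb_apply_eq]
    have hp1 : (1:ℤ) ≤ (p:ℤ) := by exact_mod_cast Nat.one_le_iff_ne_zero.mpr hp
    split_ifs <;> first | omega | simp_all
  · rw [tb_apply_ne p q hp hq h, tb_apply_ne p q hp hq h]
    have hp1 : (1:ℤ) ≤ (p:ℤ) := by exact_mod_cast Nat.one_le_iff_ne_zero.mpr hp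
    have hq1 : (1:ℤ) ≤ (q:ℤ) := by exact_mod_cast Nat.one_le_iff_ne_zero.mpr hq
    have hpq' : (p:ℤ) ≠ (q:ℤ) := by exact_mod_cast h
    split_ifs <;> first | omega | simp_all

lemma tb_supp (p q : ℕ) (hp : p ≠ 0) (hq : q ≠ 0) : SuppLe (max p q) (tb p q) := by
  intro i hi
  have : ((max p q : ℕ) : ℤ) = max (p:ℤ) (q:ℤ) := by push_cast; rfl
  rw [this] at hi
  rcases eq_or_ne p q with h | h
  · subst h; rw [tb_apply_eq]
    rcases abs_cases i with ⟨h1,h2⟩|⟨h1,h2⟩ <;> split_ifs <;> first | omega | simp_all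
  · rw [tb_apply_ne p q hp hq h]
    rcases abs_cases i with ⟨h1,h2⟩|⟨h1,h2⟩ <;> split_ifs <;> first | omega | simp_all

lemma tb_comm (p q : ℕ) (hp : p ≠ 0) (hq : q ≠ 0) (hpq : p ≠ q) : tb p q = tb q p := by
  ext x
  rw [tb_apply_ne p q hp hq hpq, tb_apply_ne q p hq hp (Ne.symm hpq)]
  have hpq' : (p:ℤ) ≠ (q:ℤ) := by exact_mod_cast hpq
  have hp1 : (1:ℤ) ≤ (p:ℤ) := by exact_mod_cast Nat.one_le_iff_ne_zero.mpr hp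
  have hq1 : (1:ℤ) ≤ (q:ℤ) := by exact_mod_cast Nat.one_le_iff_ne_zero.mpr hq
  split_ifs <;> first | omega | simp_all

lemma odd_mul {f g : Equiv.Perm ℤ} (hf : IsOddPerm f) (hg : IsOddPerm g) :
    IsOddPerm (f * g) := fun i => by
  rw [Equiv.Perm.mul_apply, Equiv.Perm.mul_apply, hg, hf]

lemma odd_apply_zero {f : Equiv.Perm ℤ} (hf : IsOddPerm f) : f 0 = 0 := by
  have := hf 0; rw [neg_zero] at this; omega

lemma odd_ne_zero {f : Equiv.Perm ℤ} (hf : IsOddPerm f) {x : ℤ} (hx : x ≠ 0) : f x ≠ 0 := by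
  intro h
  exact hx (f.injective (h.trans (odd_apply_zero hf).symm))

lemma suppLe_mul {f g : Equiv.Perm ℤ} {n m : ℕ} (hf : SuppLe n f) (hg : SuppLe m g) :
    SuppLe (max n m) (f * g) := by
  intro i hi
  have h1 : (n:ℤ) < |i| := lt_of_le_of_lt (by exact_mod_cast Nat.le_max_left n m) hi
  have h2 : (m:ℤ) < |i| := lt_of_le_of_lt (by exact_mod_cast Nat.le_max_right n m) hi
  rw [Equiv.Perm.mul_apply, hg i h2, hf i h1]

lemma suppLe_mono {f : Equiv.Perm ℤ} {n m : ℕ} (h : n ≤ m) (hf : SuppLe n f) : SuppLe m f := by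
  intro i hi
  exact hf i (lt_of_le_of_lt (by exact_mod_cast h) hi)

lemma inWinf_mul_wS {f : Equiv.Perm ℤ} (hf : InWinf f) (t : ℕ) : InWinf (f * wS t) := by
  obtain ⟨hodd, n, hsupp⟩ := hf
  exact ⟨odd_mul hodd (wS_odd t), max n (t+1), suppLe_mul hsupp (wS_supp t)⟩

lemma inWinf_mul_tt {f : Equiv.Perm ℤ} (hf : InWinf f) (p q : ℕ) (hp : p ≠ 0) (hq : q ≠ 0)
    (hpq : p ≠ q) : InWinf (f * tt p q) := by
  obtain ⟨hodd, n, hsupp⟩ := hf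
  exact ⟨odd_mul hodd (tt_odd p q hp hq hpq), max n (max p q),
    suppLe_mul hsupp (tt_supp p q hp hq hpq)⟩

lemma inWinf_mul_tb {f : Equiv.Perm ℤ} (hf : InWinf f) (p q : ℕ) (hp : p ≠ 0) (hq : q ≠ 0) :
    InWinf (f * tb p q) := by
  obtain ⟨hodd, n, hsupp⟩ := hf
  exact ⟨odd_mul hodd (tb_odd p q hp hq), max n (max p q), suppLe_mul hsupp (tb_supp p q hp hq)⟩

lemma inWinf_one : InWinf 1 := ⟨fun i => by simp, 0, fun i _ => rfl⟩


/-- The inversion set defining the length statistic. -/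
def SD (w : Equiv.Perm ℤ) : Set (ℤ × ℤ) :=
  {x | 0 < x.2 ∧ -x.2 ≤ x.1 ∧ x.1 < x.2 ∧ x.1 ≠ 0 ∧ w x.2 < w x.1}

/-- The length statistic. -/
def phi (w : Equiv.Perm ℤ) : ℕ := (SD w).ncard

lemma abs_le_of_suppLe {w : Equiv.Perm ℤ} {n : ℕ} (hs : SuppLe n w) {x : ℤ}
    (hx : |x| ≤ n) : |w x| ≤ n := by
  by_contra h
  push_neg at h
  have h2 := hs (w x) h
  have h3 : w x = x := w.injective h2
  rw [h3] at h
  omega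

lemma SD_finite {w : Equiv.Perm ℤ} (hW : InWinf w) : (SD w).Finite := by
  obtain ⟨hodd, n, hs⟩ := hW
  apply Set.Finite.subset (Set.finite_Icc ((-(n:ℤ), -(n:ℤ))) ((n:ℤ), (n:ℤ)))
  rintro ⟨i, j⟩ ⟨hj, hij1, hij2, hi0, hinv⟩
  simp only at hj hij1 hij2 hi0 hinv
  have hjn : j ≤ n := by
    by_contra h
    push_neg at h
    have hwj : w j = j := hs j (by rw [abs_of_pos hj]; omega)
    rcases le_or_gt (|i|) n with hi | hi
    · have h4 := abs_le_of_suppLe hs hi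
      have h5 : w i ≤ n := (abs_le.mp h4).2
      omega
    · have hwi : w i = i := hs i hi
      omega
  rw [Set.mem_Icc, Prod.le_def, Prod.le_def]
  simp only
  omega

def nrm (x : ℤ × ℤ) : ℤ × ℤ :=
  if 0 < x.1 + x.2 ∨ (x.1 + x.2 = 0 ∧ 0 < x.2) then x else (-x.2, -x.1)

lemma nrm_pos {x : ℤ × ℤ} (h : 0 < x.1 + x.2 ∨ (x.1 + x.2 = 0 ∧ 0 < x.2)) : nrm x = x :=
  if_pos h

lemma nrm_neg {x : ℤ × ℤ} (h : ¬(0 < x.1 + x.2 ∨ (x.1 + x.2 = 0 ∧ 0 < x.2))) :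
    nrm x = (-x.2, -x.1) := if_neg h

/-- Core: the map `x ↦ nrm (τ x.1, τ x.2)` sends `SD w \ {bad}` into `SD (w·τ) \ {bad}`
and is self-inverse there. -/
lemma core_maps {w τ : Equiv.Perm ℤ} {bad : ℤ × ℤ}
    (hw : IsOddPerm w) (hτ : IsOddPerm τ) (hinv : τ * τ = 1)
    (hord : ∀ x y : ℤ, x ≠ 0 → y ≠ 0 → x < y → ¬(x = bad.1 ∧ y = bad.2) →
      ¬(x = -bad.2 ∧ y = -bad.1) → τ x < τ y)
    (hmir : bad.1 = -bad.2 ∨ 0 < bad.1)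
    (hflip : τ bad.2 < τ bad.1) :
    ∀ x ∈ SD w \ {bad}, (nrm (τ x.1, τ x.2) ∈ SD (w * τ) \ {bad}) ∧
      nrm (τ (nrm (τ x.1, τ x.2)).1, τ (nrm (τ x.1, τ x.2)).2) = x := by
  have hττ : ∀ z : ℤ, τ (τ z) = z := fun z => by
    have := congrArg (fun f => f.1 z) hinv
    simpa [Equiv.Perm.mul_apply] using this
  rintro ⟨i, j⟩ ⟨⟨hj, hij1, hij2, hi0, hwinv⟩, hxbad⟩
  simp only at hj hij1 hij2 hi0 hwinv
  simp only [Set.mem_singleton_iff] at hxbad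
  have hj0 : j ≠ 0 := by omega
  have ha0 : τ i ≠ 0 := odd_ne_zero hτ hi0
  have hb0 : τ j ≠ 0 := odd_ne_zero hτ hj0
  have hab : τ i < τ j := by
    apply hord i j hi0 hj0 hij2
    · intro h; exact hxbad (Prod.ext h.1 h.2)
    · rintro ⟨h1, h2⟩
      rcases hmir with hc | hc
      · exact hxbad (Prod.ext (by omega) (by omega))
      · omega
  have hwa : (w * τ) (τ i) = w i := by rw [Equiv.Perm.mul_apply, hττ]
  have hwb : (w * τ) (τ j) = w j := by rw [Equiv.Perm.mul_apply, hττ]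
  have hwodd : IsOddPerm (w * τ) := odd_mul hw hτ
  by_cases hc : 0 < τ i + τ j ∨ (τ i + τ j = 0 ∧ 0 < τ j)
  · have hnrm : nrm (τ i, τ j) = (τ i, τ j) := nrm_pos (by simpa using hc)
    rw [hnrm]
    have hbpos : 0 < τ j := by rcases hc with h | h <;> omega
    have hmem : ((τ i, τ j) : ℤ × ℤ) ∈ SD (w * τ) := by
      refine ⟨hbpos, ?_, hab, ha0, ?_⟩
      · simp only; omega
      · simp only [hwa, hwb]; exact hwinv
    have hne : ((τ i, τ j) : ℤ × ℤ) ≠ bad := by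
      intro h
      have h1 : τ i = bad.1 := congrArg Prod.fst h
      have h2 : τ j = bad.2 := congrArg Prod.snd h
      have e1 : τ bad.1 = i := by rw [← h1, hττ]
      have e2 : τ bad.2 = j := by rw [← h2, hττ]
      rw [e1, e2] at hflip
      omega
    refine ⟨⟨hmem, hne⟩, ?_⟩
    simp only [hττ]
    exact nrm_pos (by simp only; omega)
  · have hab0 : τ i + τ j < 0 := by
      push_neg at hc
      rcases lt_trichotomy (τ i + τ j) 0 with h | h | h
      · exact h
      · exfalso; have := hc.2 h; omega
      · exact absurd h (by omega)
    have hnrm : nrm (τ i, τ j) = (-τ j, -τ i) := nrm_neg (by simp only; omega)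
    rw [hnrm]
    have hmem : ((-τ j, -τ i) : ℤ × ℤ) ∈ SD (w * τ) := by
      refine ⟨by simp only; omega, by simp only; omega, by simp only; omega,
        by simp only; omega, ?_⟩
      simp only
      rw [hwodd (τ i), hwodd (τ j), hwa, hwb]
      omega
    have hne : ((-τ j, -τ i) : ℤ × ℤ) ≠ bad := by
      intro h
      have h1 : -τ j = bad.1 := congrArg Prod.fst h
      have h2 : -τ i = bad.2 := congrArg Prod.snd h
      have e1 : τ bad.1 = -j := by rw [← h1, hτ (τ j), hττ]
      have e2 : τ bad.2 = -i := by rw [← h2, hτ (τ i), hττ]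
      rw [e1, e2] at hflip
      omega
    refine ⟨⟨hmem, hne⟩, ?_⟩
    simp only [hτ (τ i), hτ (τ j), hττ]
    by_cases hz : i + j = 0
    · rw [nrm_pos (by simp only; omega)]
      simp only [Prod.mk.injEq]
      omega
    · rw [nrm_neg (by simp only; omega)]
      simp only [neg_neg]

lemma phi_step {w τ : Equiv.Perm ℤ} {bad : ℤ × ℤ} (hW : InWinf w) (hWτ : InWinf τ)
    (hinv : τ * τ = 1)
    (hord : ∀ x y : ℤ, x ≠ 0 → y ≠ 0 → x < y → ¬(x = bad.1 ∧ y = bad.2) →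
      ¬(x = -bad.2 ∧ y = -bad.1) → τ x < τ y)
    (hmir : bad.1 = -bad.2 ∨ 0 < bad.1)
    (hflip : τ bad.2 < τ bad.1)
    (hin : bad ∈ SD (w * τ)) (hout : bad ∉ SD w) :
    phi (w * τ) = phi w + 1 := by
  obtain ⟨hw, n, hs⟩ := hW
  obtain ⟨hτodd, m, hsτ⟩ := hWτ
  have hWt : InWinf (w * τ) := ⟨odd_mul hw hτodd, max n m, suppLe_mul hs hsτ⟩
  have hwt : (w * τ) * τ = w := by rw [mul_assoc, hinv, mul_one]
  have A := core_maps hw hτodd hinv hord hmir hflip (w := w)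
  have B := core_maps (odd_mul hw hτodd) hτodd hinv hord hmir hflip (w := w * τ)
  rw [hwt] at B
  set G : ℤ × ℤ → ℤ × ℤ := fun x => nrm (τ x.1, τ x.2) with hG
  have hbij : Set.BijOn G (SD w \ {bad}) (SD (w * τ) \ {bad}) := by
    refine ⟨fun x hx => (A x hx).1, ?_, ?_⟩
    · intro x hx y hy hxy
      have e1 := (A x hx).2
      have e2 := (A y hy).2
      simp only [hG] at hxy
      rw [← e1, ← e2, hxy]
    · intro y hy
      exact ⟨G y, (B y hy).1, (B y hy).2⟩
  have hfin : (SD (w * τ)).Finite := SD_finite hWt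
  have hfinw : (SD w).Finite := SD_finite ⟨hw, n, hs⟩
  have h1 : (SD (w * τ) \ {bad}).ncard + 1 = (SD (w * τ)).ncard :=
    Set.ncard_diff_singleton_add_one hin hfin
  have h2 : SD (w * τ) \ {bad} = G '' (SD w \ {bad}) := hbij.image_eq.symm
  have h3 : (G '' (SD w \ {bad})).ncard = (SD w \ {bad}).ncard :=
    Set.ncard_image_of_injOn hbij.injOn
  have h4 : SD w \ {bad} = SD w := Set.diff_singleton_eq_self hout
  unfold phi
  rw [← h1, h2, h3, h4]

lemma not_descent_lt {w : Equiv.Perm ℤ} (hW : InWinf w) {p : ℕ} (ha : ¬ Descent w p) :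
    (if p = 0 then 0 else w (p:ℤ)) < w ((p:ℤ)+1) := by
  unfold Descent at ha
  push_neg at ha
  rcases Nat.eq_zero_or_pos p with h | h
  · subst h
    norm_num at ha ⊢
    have h0 : w 0 = 0 := odd_apply_zero hW.1
    have hne : w 1 ≠ 0 := by
      intro hcon
      have := w.injective (hcon.trans h0.symm)
      omega
    omega
  · have hp0 : p ≠ 0 := by omega
    rw [if_neg hp0] at ha ⊢
    have hne : w ((p:ℤ)+1) ≠ w (p:ℤ) := by
      intro hcon
      have := w.injective hcon
      omega
    omega

lemma wS0_one : wS 0 (1:ℤ) = -1 := by rw [wS_apply_zero]; norm_num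
lemma wS0_negone : wS 0 (-1:ℤ) = 1 := by rw [wS_apply_zero]; norm_num
lemma wSp_p {p : ℕ} (hp0 : p ≠ 0) : wS p ((p:ℤ)) = (p:ℤ)+1 := by
  rw [wS_apply_pos p hp0]; split_ifs <;> omega
lemma wSp_p1 {p : ℕ} (hp0 : p ≠ 0) : wS p ((p:ℤ)+1) = (p:ℤ) := by
  have hp1 : (1:ℤ) ≤ (p:ℤ) := by exact_mod_cast Nat.one_le_iff_ne_zero.mpr hp0
  rw [wS_apply_pos p hp0]; split_ifs <;> omega

lemma phi_wS_ascent {w : Equiv.Perm ℤ} (hW : InWinf w) {p : ℕ} (ha : ¬ Descent w p) :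
    phi (w * wS p) = phi w + 1 := by
  have ha' := not_descent_lt hW ha
  rcases Nat.eq_zero_or_pos p with h | h
  · subst h
    norm_num at ha'
    refine phi_step (bad := ((-1 : ℤ), (1 : ℤ))) hW
      ⟨wS_odd 0, 1, suppLe_mono (by omega) (wS_supp 0)⟩ (wS_invol 0) ?_ ?_ ?_ ?_ ?_
    · intro x y hx hy hxy h1 h2
      simp only at h1 h2
      rw [wS_apply_zero, wS_apply_zero]
      split_ifs <;> omega
    · left; simp
    · simp only [wS_apply_zero]
      norm_num
    · refine ⟨by norm_num, by norm_num, by norm_num, by norm_num, ?_⟩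
      simp only [Equiv.Perm.mul_apply, wS0_one, wS0_negone]
      rw [hW.1 1]
      omega
    · rintro ⟨-, -, -, -, hlt⟩
      simp only at hlt
      rw [hW.1 1] at hlt
      omega
  · have hp0 : p ≠ 0 := by omega
    rw [if_neg hp0] at ha'
    have hp1 : (1:ℤ) ≤ (p:ℤ) := by exact_mod_cast h
    refine phi_step (bad := (((p:ℕ):ℤ), ((p:ℕ):ℤ)+1)) hW
      ⟨wS_odd p, p+1, wS_supp p⟩ (wS_invol p) ?_ ?_ ?_ ?_ ?_
    · intro x y hx hy hxy h1 h2
      simp only at h1 h2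
      rw [wS_apply_pos p hp0, wS_apply_pos p hp0]
      split_ifs <;> omega
    · right; simp only; omega
    · simp only [wS_apply_pos p hp0]
      split_ifs <;> omega
    · refine ⟨by simp only; omega, by simp only; omega, by simp only; omega,
        by simp only; omega, ?_⟩
      simp only [Equiv.Perm.mul_apply, wS_apply_pos p hp0]
      split_ifs <;> first | omega | exact ha'
    · rintro ⟨-, -, -, -, hlt⟩
      simp only at hlt
      omega

lemma phi_wS_descent {w : Equiv.Perm ℤ} (hW : InWinf w) {p : ℕ} (hd : Descent w p) :
    phi w = phi (w * wS p) + 1 := by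
  have hW' : InWinf (w * wS p) := inWinf_mul_wS hW p
  have hkey : ¬ Descent (w * wS p) p := by
    unfold Descent at hd ⊢
    rcases Nat.eq_zero_or_pos p with h | h
    · subst h
      norm_num at hd ⊢
      rw [wS0_one, hW.1 1]
      omega
    · have hp0 : p ≠ 0 := by omega
      have hp1 : (1:ℤ) ≤ (p:ℤ) := by exact_mod_cast h
      rw [if_neg hp0] at hd ⊢
      rw [Equiv.Perm.mul_apply, Equiv.Perm.mul_apply, wSp_p hp0, wSp_p1 hp0]
      omega
  have := phi_wS_ascent hW' hkey
  rw [mul_assoc, wS_invol p, mul_one] at this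
  omega

lemma phi_wS_le {w : Equiv.Perm ℤ} (hW : InWinf w) (p : ℕ) :
    phi (w * wS p) ≤ phi w + 1 := by
  by_cases hd : Descent w p
  · have := phi_wS_descent hW hd
    omega
  · exact le_of_eq (phi_wS_ascent hW hd)

lemma inWinf_mul {f g : Equiv.Perm ℤ} (hf : InWinf f) (hg : InWinf g) : InWinf (f * g) := by
  obtain ⟨h1, n, h2⟩ := hf
  obtain ⟨h3, m, h4⟩ := hg
  exact ⟨odd_mul h1 h3, max n m, suppLe_mul h2 h4⟩

lemma inWinf_wS (t : ℕ) : InWinf (wS t) := ⟨wS_odd t, t+1, wS_supp t⟩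

lemma inWinf_prod (l : List ℕ) : InWinf ((l.map wS).prod) := by
  induction l with
  | nil => simpa using inWinf_one
  | cons a l ih =>
      rw [List.map_cons, List.prod_cons]
      exact inWinf_mul (inWinf_wS a) ih

lemma phi_one : phi 1 = 0 := by
  have : SD (1 : Equiv.Perm ℤ) = ∅ := by
    ext ⟨i, j⟩
    simp only [SD, Set.mem_setOf_eq, Set.mem_empty_iff_false, iff_false, not_and]
    intro h1 h2 h3 h4
    simp only [Equiv.Perm.one_apply]
    omega
  rw [phi, this, Set.ncard_empty]

lemma no_descent_eq_one {w : Equiv.Perm ℤ} (hW : InWinf w)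
    (hnd : ∀ p : ℕ, ¬ Descent w p) : w = 1 := by
  obtain ⟨hodd, n, hs⟩ := hW
  have hstep : ∀ p : ℕ, p ≠ 0 → w (p:ℤ) < w ((p:ℤ)+1) := by
    intro p hp
    have := not_descent_lt ⟨hodd, n, hs⟩ (hnd p)
    rwa [if_neg hp] at this
  have h1 : (0:ℤ) < w 1 := by
    have := not_descent_lt ⟨hodd, n, hs⟩ (hnd 0)
    norm_num at this
    exact this
  have hlow : ∀ p : ℕ, 1 ≤ p → (p:ℤ) ≤ w (p:ℤ) := by
    intro p hp
    induction p with
    | zero => omega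
    | succ q ih =>
        rcases Nat.eq_zero_or_pos q with h | h
        · subst h; norm_num; omega
        · have h2 := ih (by omega)
          have h3 := hstep q (by omega)
          push_cast
          push_cast at h2 h3
          omega
  have hupper : ∀ d p : ℕ, 1 ≤ p → n < p + d → w (p:ℤ) = (p:ℤ) := by
    intro d
    induction d with
    | zero =>
        intro p hp hn
        apply hs
        rw [abs_of_pos (by exact_mod_cast hp : (0:ℤ) < (p:ℤ))]
        exact_mod_cast hn
    | succ e ih =>
        intro p hp hn
        have h1' : w ((p+1:ℕ):ℤ) = ((p+1:ℕ):ℤ) := ih (p+1) (by omega) (by omega)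
        push_cast at h1'
        have h2 := hstep p (by omega)
        have h3 := hlow p hp
        omega
  have hpos : ∀ x : ℤ, 0 < x → w x = x := by
    intro x hx
    have hx' : ((x.toNat : ℕ) : ℤ) = x := Int.toNat_of_nonneg (by omega)
    rw [← hx']
    exact hupper (n+1) x.toNat (by omega) (by omega)
  ext x
  rcases lt_trichotomy x 0 with h | h | h
  · have : w (-(-x)) = - w (-x) := hodd (-x)
    rw [neg_neg] at this
    rw [this, hpos (-x) (by omega), Equiv.Perm.one_apply]
    omega
  · subst h; rw [odd_apply_zero hodd, Equiv.Perm.one_apply]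
  · rw [hpos x h, Equiv.Perm.one_apply]

lemma word_exists : ∀ N : ℕ, ∀ w : Equiv.Perm ℤ, InWinf w → phi w = N →
    ∃ l : List ℕ, l.length = N ∧ (l.map wS).prod = w := by
  intro N
  induction N using Nat.strong_induction_on with
  | _ N ih =>
      intro w hW hphi
      by_cases hd : ∃ p : ℕ, Descent w p
      · obtain ⟨p, hp⟩ := hd
        have hdec := phi_wS_descent hW hp
        have hW' : InWinf (w * wS p) := inWinf_mul_wS hW p
        obtain ⟨l, hl, hprod⟩ := ih (phi (w * wS p)) (by omega) (w * wS p) hW' rfl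
        refine ⟨l ++ [p], ?_, ?_⟩
        · simp [hl]; omega
        · rw [List.map_append, List.prod_append]
          simp only [List.map_cons, List.map_nil, List.prod_cons, List.prod_nil, mul_one]
          rw [hprod, mul_assoc, wS_invol, mul_one]
      · push_neg at hd
        have h1 : w = 1 := no_descent_eq_one hW hd
        subst h1
        have : N = 0 := by rw [← hphi, phi_one]
        subst this
        exact ⟨[], rfl, rfl⟩

lemma phi_prod_le (l : List ℕ) : phi ((l.map wS).prod) ≤ l.length := by
  induction l using List.reverseRecOn with
  | nil => simp only [List.map_nil, List.prod_nil, List.length_nil, phi_one, le_refl]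
  | append_singleton l a ih =>
      rw [List.map_append, List.prod_append, List.length_append]
      simp only [List.map_cons, List.map_nil, List.prod_cons, List.prod_nil, mul_one,
        List.length_cons, List.length_nil]
      have := phi_wS_le (inWinf_prod l) a
      omega

lemma len_eq_phi {w : Equiv.Perm ℤ} (hW : InWinf w) : len w = phi w := by
  obtain ⟨l, hl, hprod⟩ := word_exists (phi w) w hW rfl
  apply le_antisymm
  · exact Nat.sInf_le ⟨l, hl, hprod⟩
  · have hne : {m : ℕ | ∃ l : List ℕ, l.length = m ∧ (l.map wS).prod = w}.Nonempty :=
      ⟨phi w, l, hl, hprod⟩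
    apply le_csInf hne
    rintro m ⟨l', hl', hprod'⟩
    rw [← hprod', ← hl']
    exact phi_prod_le l'

lemma natpos {p : ℕ} (hp : p ≠ 0) : (1:ℤ) ≤ (p:ℤ) := by
  exact_mod_cast Nat.one_le_iff_ne_zero.mpr hp

lemma wSp_fix {p : ℕ} (hp0 : p ≠ 0) {x : ℤ} (h1 : x ≠ (p:ℤ)) (h2 : x ≠ (p:ℤ)+1)
    (h3 : x ≠ -(p:ℤ)) (h4 : x ≠ -((p:ℤ)+1)) : wS p x = x := by
  rw [wS_apply_pos p hp0]
  split_ifs <;> omega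

lemma tt_at_p {p q : ℕ} (hp : p ≠ 0) (hq : q ≠ 0) (hpq : p ≠ q) : tt p q (p:ℤ) = (q:ℤ) := by
  have := natpos hp; have := natpos hq
  rw [tt_apply p q hp hq hpq]; split_ifs <;> omega

lemma tt_at_q {p q : ℕ} (hp : p ≠ 0) (hq : q ≠ 0) (hpq : p ≠ q) : tt p q (q:ℤ) = (p:ℤ) := by
  have := natpos hp; have := natpos hq
  have h' : (p:ℤ) ≠ (q:ℤ) := by exact_mod_cast hpq
  rw [tt_apply p q hp hq hpq]; split_ifs <;> omega

lemma tt_fix {p q : ℕ} (hp : p ≠ 0) (hq : q ≠ 0) (hpq : p ≠ q) {x : ℤ} (h1 : x ≠ (p:ℤ))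
    (h2 : x ≠ (q:ℤ)) (h3 : x ≠ -(p:ℤ)) (h4 : x ≠ -(q:ℤ)) : tt p q x = x := by
  rw [tt_apply p q hp hq hpq]; split_ifs <;> omega

lemma tb_at_p {p q : ℕ} (hp : p ≠ 0) (hq : q ≠ 0) (hpq : p ≠ q) : tb p q (p:ℤ) = -(q:ℤ) := by
  have := natpos hp; have := natpos hq
  rw [tb_apply_ne p q hp hq hpq]; split_ifs <;> omega

lemma tb_at_q {p q : ℕ} (hp : p ≠ 0) (hq : q ≠ 0) (hpq : p ≠ q) : tb p q (q:ℤ) = -(p:ℤ) := by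
  have := natpos hp; have := natpos hq
  have h' : (p:ℤ) ≠ (q:ℤ) := by exact_mod_cast hpq
  rw [tb_apply_ne p q hp hq hpq]; split_ifs <;> omega

lemma tb_fix {p q : ℕ} (hp : p ≠ 0) (hq : q ≠ 0) (hpq : p ≠ q) {x : ℤ} (h1 : x ≠ (p:ℤ))
    (h2 : x ≠ (q:ℤ)) (h3 : x ≠ -(p:ℤ)) (h4 : x ≠ -(q:ℤ)) : tb p q x = x := by
  rw [tb_apply_ne p q hp hq hpq]; split_ifs <;> omega

lemma tbrr_at_r {r : ℕ} (hr : r ≠ 0) : tb r r (r:ℤ) = -(r:ℤ) := by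
  have := natpos hr
  rw [tb_apply_eq]; split_ifs <;> omega

lemma tbrr_fix {r : ℕ} {x : ℤ} (h1 : x ≠ (r:ℤ)) (h2 : x ≠ -(r:ℤ)) : tb r r x = x := by
  rw [tb_apply_eq]; split_ifs <;> omega

lemma tt_eq_wS {p : ℕ} (hp : p ≠ 0) : tt p (p+1) = wS p := by
  ext x
  have := natpos hp
  rw [tt_apply p (p+1) hp (by omega) (by omega), wS_apply_pos p hp]
  split_ifs <;> omega

lemma inv_wS (p : ℕ) : (wS p)⁻¹ = wS p := inv_eq_of_mul_eq_one_right (wS_invol p)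

lemma conj_two (σ : Equiv.Perm ℤ) (a b c d : ℤ) :
    σ * (Equiv.swap a b * Equiv.swap c d) * σ⁻¹ =
      Equiv.swap (σ a) (σ b) * Equiv.swap (σ c) (σ d) := by
  rw [Equiv.swap_apply_apply, Equiv.swap_apply_apply]
  group

lemma conj_tt {p q : ℕ} (hp : p ≠ 0) (hq : p + 1 < q) :
    tt p q = wS p * tt (p+1) q * wS p := by
  have hq0 : q ≠ 0 := by omega
  have hp1 := natpos hp
  have hq1 := natpos hq0
  have hqq : ((q:ℕ):ℤ) > (p:ℤ)+1 := by exact_mod_cast hq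
  have e0 : ((p+1:ℕ):ℤ) = (p:ℤ)+1 := by push_cast; ring
  have h2 : tt (p+1) q = Equiv.swap (((p+1:ℕ)):ℤ) ((q:ℕ):ℤ)
      * Equiv.swap (-(((p+1:ℕ)):ℤ)) (-((q:ℕ):ℤ)) := rfl
  rw [h2]
  conv_rhs => rw [show wS p * (Equiv.swap (((p+1:ℕ)):ℤ) ((q:ℕ):ℤ)
      * Equiv.swap (-(((p+1:ℕ)):ℤ)) (-((q:ℕ):ℤ))) * wS p
      = wS p * (Equiv.swap (((p+1:ℕ)):ℤ) ((q:ℕ):ℤ)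
      * Equiv.swap (-(((p+1:ℕ)):ℤ)) (-((q:ℕ):ℤ))) * (wS p)⁻¹ by rw [inv_wS]]
  rw [conj_two, e0, wSp_p1 hp,
    wSp_fix hp (x := ((q:ℕ):ℤ)) (by omega) (by omega) (by omega) (by omega),
    show wS p (-((p:ℤ)+1)) = -(p:ℤ) from by
      rw [wS_apply_pos p hp]; split_ifs <;> omega,
    wSp_fix hp (x := (-((q:ℕ):ℤ))) (by omega) (by omega) (by omega) (by omega)]
  rfl

lemma conj_tb_rr {t : ℕ} (ht : t ≠ 0) : tb (t+1) (t+1) = wS t * tb t t * wS t := by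
  have ht1 := natpos ht
  have e0 : ((t+1:ℕ):ℤ) = (t:ℤ)+1 := by push_cast; ring
  have h1 : tb t t = Equiv.swap ((t:ℕ):ℤ) (-((t:ℕ):ℤ)) := by rw [tb, if_pos rfl]
  have h2 : tb (t+1) (t+1) = Equiv.swap (((t+1:ℕ)):ℤ) (-(((t+1:ℕ)):ℤ)) := by
    rw [tb, if_pos rfl]
  rw [h1, h2]
  conv_rhs => rw [show wS t * Equiv.swap ((t:ℕ):ℤ) (-((t:ℕ):ℤ)) * wS t
      = wS t * Equiv.swap ((t:ℕ):ℤ) (-((t:ℕ):ℤ)) * (wS t)⁻¹ by rw [inv_wS]]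
  rw [← Equiv.swap_apply_apply]
  rw [wSp_p ht, show wS t (-(t:ℤ)) = -((t:ℤ)+1) from by
    rw [wS_apply_pos t ht]; split_ifs <;> omega]
  rw [e0]

lemma conj_tb_left {t q : ℕ} (ht : t ≠ 0) (hq : t + 1 < q) :
    tb (t+1) q = wS t * tb t q * wS t := by
  have hq0 : q ≠ 0 := by omega
  have ht1 := natpos ht
  have hq1 := natpos hq0
  have hqq : ((q:ℕ):ℤ) > (t:ℤ)+1 := by exact_mod_cast hq
  have e0 : ((t+1:ℕ):ℤ) = (t:ℤ)+1 := by push_cast; ring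
  have h1 : tb t q = Equiv.swap ((t:ℕ):ℤ) (-((q:ℕ):ℤ)) * Equiv.swap ((q:ℕ):ℤ) (-((t:ℕ):ℤ)) := by
    rw [tb, if_neg (by omega : t ≠ q)]
  have h2 : tb (t+1) q
      = Equiv.swap (((t+1:ℕ)):ℤ) (-((q:ℕ):ℤ)) * Equiv.swap ((q:ℕ):ℤ) (-(((t+1:ℕ)):ℤ)) := by
    rw [tb, if_neg (by omega : t+1 ≠ q)]
  rw [h1, h2]
  conv_rhs => rw [show wS t * (Equiv.swap ((t:ℕ):ℤ) (-((q:ℕ):ℤ)) * Equiv.swap ((q:ℕ):ℤ) (-((t:ℕ):ℤ))) * wS t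
      = wS t * (Equiv.swap ((t:ℕ):ℤ) (-((q:ℕ):ℤ)) * Equiv.swap ((q:ℕ):ℤ) (-((t:ℕ):ℤ))) * (wS t)⁻¹ by rw [inv_wS]]
  rw [conj_two]
  rw [wSp_p ht, wSp_fix ht (x := (-((q:ℕ):ℤ))) (by omega) (by omega) (by omega) (by omega),
    wSp_fix ht (x := ((q:ℕ):ℤ)) (by omega) (by omega) (by omega) (by omega),
    show wS t (-(t:ℤ)) = -((t:ℤ)+1) from by
      rw [wS_apply_pos t ht]; split_ifs <;> omega]
  rw [e0]

lemma conj_tb_right {p t : ℕ} (hp : p ≠ 0) (ht : p < t) :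
    tb p (t+1) = wS t * tb p t * wS t := by
  have ht0 : t ≠ 0 := by omega
  have hp1 := natpos hp
  have ht1 := natpos ht0
  have htt : ((t:ℕ):ℤ) > (p:ℤ) := by exact_mod_cast ht
  have e0 : ((t+1:ℕ):ℤ) = (t:ℤ)+1 := by push_cast; ring
  have h1 : tb p t = Equiv.swap ((p:ℕ):ℤ) (-((t:ℕ):ℤ)) * Equiv.swap ((t:ℕ):ℤ) (-((p:ℕ):ℤ)) := by
    rw [tb, if_neg (by omega : p ≠ t)]
  have h2 : tb p (t+1)
      = Equiv.swap ((p:ℕ):ℤ) (-(((t+1:ℕ)):ℤ)) * Equiv.swap (((t+1:ℕ)):ℤ) (-((p:ℕ):ℤ)) := by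
    rw [tb, if_neg (by omega : p ≠ t+1)]
  rw [h1, h2]
  conv_rhs => rw [show wS t * (Equiv.swap ((p:ℕ):ℤ) (-((t:ℕ):ℤ)) * Equiv.swap ((t:ℕ):ℤ) (-((p:ℕ):ℤ))) * wS t
      = wS t * (Equiv.swap ((p:ℕ):ℤ) (-((t:ℕ):ℤ)) * Equiv.swap ((t:ℕ):ℤ) (-((p:ℕ):ℤ))) * (wS t)⁻¹ by rw [inv_wS]]
  rw [conj_two]
  rw [wSp_p ht0, wSp_fix ht0 (x := ((p:ℕ):ℤ)) (by omega) (by omega) (by omega) (by omega),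
    wSp_fix ht0 (x := (-((p:ℕ):ℤ))) (by omega) (by omega) (by omega) (by omega),
    show wS t (-(t:ℤ)) = -((t:ℤ)+1) from by
      rw [wS_apply_pos t ht0]; split_ifs <;> omega]
  rw [e0]

lemma conj_tb_base : tb 1 2 = wS 0 * wS 1 * wS 0 := by
  ext x
  simp only [Equiv.Perm.mul_apply]
  rw [tb_apply_ne 1 2 (by omega) (by omega) (by omega)]
  simp only [wS_apply_zero, wS_apply_pos 1 (by omega : (1:ℕ) ≠ 0)]
  norm_num
  split_ifs <;> first | omega | simp_all

/-- L1: covering transpositions raise `phi` by one. -/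
lemma phi_tt_cover : ∀ n : ℕ, ∀ w : Equiv.Perm ℤ, ∀ p q : ℕ, InWinf w → p ≠ 0 →
    p + n + 1 = q → w (p:ℤ) < w (q:ℤ) →
    (∀ h : ℕ, p < h → h < q → ¬(w (p:ℤ) < w (h:ℤ) ∧ w (h:ℤ) < w (q:ℤ))) →
    phi (w * tt p q) = phi w + 1 := by
  intro n
  induction n with
  | zero =>
      intro w p q hW hp0 hq hlt hmid
      have hq' : q = p + 1 := by omega
      subst hq'
      rw [tt_eq_wS hp0]
      apply phi_wS_ascent hW
      intro hdes
      unfold Descent at hdes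
      rw [if_neg hp0] at hdes
      push_cast at hlt
      omega
  | succ m ih =>
      intro w p q hW hp0 hq hlt hmid
      have hq0 : q ≠ 0 := by omega
      have hp1 : (1:ℤ) ≤ (p:ℤ) := natpos hp0
      have hqp : ((p+1:ℕ):ℤ) = (p:ℤ)+1 := by push_cast; ring
      have hqgt : (p:ℤ) + 1 < (q:ℤ) := by exact_mod_cast (by omega : p + 1 < q)
      set x := w * wS p with hx
      have hWx : InWinf x := inWinf_mul_wS hW p
      have hxp : x ((p:ℤ)+1) = w (p:ℤ) := by
        rw [hx, Equiv.Perm.mul_apply, wSp_p1 hp0]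
      have hxp' : x ((p:ℤ)) = w ((p:ℤ)+1) := by
        rw [hx, Equiv.Perm.mul_apply, wSp_p hp0]
      have hxq : x ((q:ℤ)) = w ((q:ℤ)) := by
        rw [hx, Equiv.Perm.mul_apply,
          wSp_fix hp0 (x := ((q:ℕ):ℤ)) (by omega) (by omega) (by omega) (by omega)]
      have hxother : ∀ h : ℕ, p + 1 < h → h < q → x ((h:ℤ)) = w ((h:ℤ)) := by
        intro h h1 h2
        have hh : ((h:ℕ):ℤ) > (p:ℤ)+1 := by exact_mod_cast h1
        rw [hx, Equiv.Perm.mul_apply,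
          wSp_fix hp0 (x := ((h:ℕ):ℤ)) (by omega) (by omega) (by omega) (by omega)]
      have hihyps : x ((p+1:ℕ):ℤ) < x ((q:ℕ):ℤ) := by
        rw [hqp, hxp, hxq]; exact hlt
      have hmidx : ∀ h : ℕ, p+1 < h → h < q → ¬(x ((p+1:ℕ):ℤ) < x (h:ℤ) ∧ x (h:ℤ) < x (q:ℤ)) := by
        intro h h1 h2
        rw [hqp, hxp, hxq, hxother h h1 h2]
        exact hmid h (by omega) h2
      have hIH := ih x (p+1) q hWx (by omega) (by omega) hihyps hmidx
      set y := x * tt (p+1) q with hy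
      have hWy : InWinf y := inWinf_mul_tt hWx (p+1) q (by omega) hq0 (by omega)
      have hyp : y ((p:ℤ)) = w ((p:ℤ)+1) := by
        rw [hy, Equiv.Perm.mul_apply,
          tt_fix (by omega : (p+1) ≠ 0) hq0 (by omega) (x := ((p:ℕ):ℤ)) (by push_cast; omega)
            (by omega) (by push_cast; omega) (by omega), hxp']
      have hyp1 : y ((p:ℤ)+1) = w ((q:ℤ)) := by
        have : ((p+1:ℕ):ℤ) = (p:ℤ)+1 := hqp
        rw [hy, Equiv.Perm.mul_apply, ← this, tt_at_p (by omega) hq0 (by omega), hxq]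
      have hfinal : y * wS p = w * tt p q := by
        rw [hy, hx, conj_tt hp0 (by omega)]
        group
      by_cases hd : w ((p:ℤ)+1) < w (p:ℤ)
      · -- descent at p first
        have hdes : Descent w p := by
          unfold Descent; rw [if_neg hp0]; exact hd
        have e1 : phi w = phi x + 1 := phi_wS_descent hW hdes
        have hasc : ¬ Descent y p := by
          unfold Descent; rw [if_neg hp0, hyp, hyp1]
          omega
        have e2 : phi (y * wS p) = phi y + 1 := phi_wS_ascent hWy hasc
        rw [hfinal] at e2
        omega
      · -- ascent at p first
        have hne : w ((p:ℤ)+1) ≠ w (p:ℤ) := by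
          intro hcon; have := w.injective hcon; omega
        have hasc : ¬ Descent w p := by
          unfold Descent; rw [if_neg hp0]; omega
        have e1 : phi x = phi w + 1 := phi_wS_ascent hW hasc
        have hd2 : w ((q:ℤ)) < w ((p:ℤ)+1) := by
          have hne2 : w ((p:ℤ)+1) ≠ w ((q:ℤ)) := by
            intro hcon; have := w.injective hcon; omega
          have := hmid (p+1) (by omega) (by omega)
          rw [hqp] at this
          omega
        have hdes : Descent (y) p := by
          unfold Descent; rw [if_neg hp0, hyp, hyp1]
          exact hd2
        have e2 : phi y = phi (y * wS p) + 1 := phi_wS_descent hWy hdes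
        rw [hfinal] at e2
        omega

lemma tb11_eq_wS0 : tb 1 1 = wS 0 := by
  rw [tb, if_pos rfl, wS, if_pos rfl]
  norm_num

/-- L2: covering sign change raises `phi` by one. -/
lemma phi_tbrr_cover : ∀ r : ℕ, ∀ w : Equiv.Perm ℤ, InWinf w → r ≠ 0 → 0 < w (r:ℤ) →
    (∀ a : ℕ, a ≠ 0 → a < r → ¬(-(w (r:ℤ)) < w (a:ℤ) ∧ w (a:ℤ) < w (r:ℤ))) →
    phi (w * tb r r) = phi w + 1 := by
  intro r
  induction r with
  | zero => intro w _ h; omega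
  | succ t ih =>
      intro w hW hr0 hpos hcond
      rcases Nat.eq_zero_or_pos t with ht | ht
      · -- base case r = 1
        subst ht
        rw [tb11_eq_wS0]
        apply phi_wS_ascent hW
        intro hdes
        unfold Descent at hdes
        norm_num at hdes hpos
        omega
      · have ht0 : t ≠ 0 := by omega
        have e1 : ((t+1:ℕ):ℤ) = (t:ℤ)+1 := by push_cast; ring
        set c := w ((t+1:ℕ):ℤ) with hcdef
        set d := w ((t:ℕ):ℤ) with hddef
        have hdc : ¬(-c < d ∧ d < c) := hcond t ht0 (by omega)
        have hdnec : d ≠ c := by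
          intro hcon
          have := w.injective hcon
          omega
        have hdnenc : d ≠ -c := by
          intro hcon
          have h2 : w (-((t+1:ℕ):ℤ)) = -c := hW.1 _
          rw [← hcon] at h2
          have := w.injective h2
          omega
        set x := w * wS t with hx
        have hWx : InWinf x := inWinf_mul_wS hW t
        have hxt : x ((t:ℕ):ℤ) = c := by
          rw [hx, Equiv.Perm.mul_apply, wSp_p ht0, hcdef, e1]
        have hxt1 : x ((t:ℤ)+1) = d := by
          rw [hx, Equiv.Perm.mul_apply, wSp_p1 ht0, hddef]
        have hxa : ∀ a : ℕ, a < t → x ((a:ℕ):ℤ) = w ((a:ℕ):ℤ) := by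
          intro a ha
          have haz : ((a:ℕ):ℤ) < (t:ℤ) := by exact_mod_cast ha
          rw [hx, Equiv.Perm.mul_apply,
            wSp_fix ht0 (x := ((a:ℕ):ℤ)) (by omega) (by omega) (by omega) (by omega)]
        set y := x * tb t t with hy
        have hWy : InWinf y := inWinf_mul_tb hWx t t ht0 ht0
        have hyt : y ((t:ℕ):ℤ) = -c := by
          rw [hy, Equiv.Perm.mul_apply, tbrr_at_r ht0, hWx.1, hxt]
        have hyt1 : y ((t:ℤ)+1) = d := by
          have := natpos ht0
          rw [hy, Equiv.Perm.mul_apply, tbrr_fix (by omega) (by omega), hxt1]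
        have hIH : phi y = phi x + 1 := by
          apply ih x hWx ht0 (by rw [hxt]; exact hpos)
          intro a ha0 hat
          rw [hxa a hat, hxt]
          exact hcond a ha0 (by omega)
        have hfinal : y * wS t = w * tb (t+1) (t+1) := by
          rw [hy, hx, conj_tb_rr ht0]
          group
        by_cases hd : c < d
        · -- descent at t first
          have hdes : Descent w t := by
            unfold Descent
            rw [if_neg ht0, ← hddef]
            have : w ((t:ℤ)+1) = c := by rw [hcdef, e1]
            omega
          have hd1 : phi w = phi x + 1 := phi_wS_descent hW hdes
          have hasc : ¬ Descent y t := by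
            unfold Descent
            rw [if_neg ht0, hyt1]
            have : y ((t:ℕ):ℤ) = -c := hyt
            omega
          have hd2 : phi (y * wS t) = phi y + 1 := phi_wS_ascent hWy hasc
          rw [hfinal] at hd2
          omega
        · have hdlt : d < -c := by omega
          have hasc : ¬ Descent w t := by
            unfold Descent
            rw [if_neg ht0, ← hddef]
            have : w ((t:ℤ)+1) = c := by rw [hcdef, e1]
            omega
          have hd1 : phi x = phi w + 1 := phi_wS_ascent hW hasc
          have hdes : Descent y t := by
            unfold Descent
            rw [if_neg ht0, hyt1]
            have : y ((t:ℕ):ℤ) = -c := hyt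
            omega
          have hd2 : phi y = phi (y * wS t) + 1 := phi_wS_descent hWy hdes
          rw [hfinal] at hd2
          omega

/-- L3: covering reflections of type `t̄` raise `phi` by one. -/
lemma phi_tb_cover : ∀ n : ℕ, ∀ w : Equiv.Perm ℤ, ∀ p q : ℕ, ∀ N P : ℤ, InWinf w →
    p ≠ 0 → p < q → p + q = n →
    ((w (p:ℤ) = -N ∧ w (q:ℤ) = P) ∨ (w (p:ℤ) = P ∧ w (q:ℤ) = -N)) →
    0 < N → N < P →
    (∀ h : ℕ, h ≠ 0 → h < p →
      ¬(N < w (h:ℤ) ∧ w (h:ℤ) < P) ∧ ¬(N < -(w (h:ℤ)) ∧ -(w (h:ℤ)) < P)) →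
    (∀ h : ℕ, p < h → h < q → ¬(-(w (p:ℤ)) < w (h:ℤ) ∧ w (h:ℤ) < w (q:ℤ))) →
    phi (w * tb p q) = phi w + 1 := by
  intro n
  induction n using Nat.strong_induction_on with
  | _ n ih =>
  intro w p q N P hW hp0 hpq hn hNP hN hNltP hI hII
  by_cases hq1 : p + 1 < q
  · -- reduce q
    have hq0 : q ≠ 0 := by omega
    obtain ⟨t, rfl⟩ : ∃ t, q = t + 1 := ⟨q - 1, by omega⟩
    have hpt : p < t := by omega
    have ht0 : t ≠ 0 := by omega
    have e1 : ((t+1:ℕ):ℤ) = (t:ℤ)+1 := by push_cast; ring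
    have hIIt := hII t hpt (by omega)
    have hdneb : w ((t:ℕ):ℤ) ≠ w ((t+1:ℕ):ℤ) := by
      intro hcon
      have := w.injective hcon
      omega
    have hdnea : w ((t:ℕ):ℤ) ≠ -(w ((p:ℕ):ℤ)) := by
      intro hcon
      have h2 : w (-((p:ℕ):ℤ)) = -(w ((p:ℕ):ℤ)) := hW.1 _
      rw [← hcon] at h2
      have h3 := w.injective h2
      have := natpos hp0
      have := natpos ht0
      omega
    set x := w * wS t with hx
    have hWx : InWinf x := inWinf_mul_wS hW t
    have hxp : x ((p:ℕ):ℤ) = w ((p:ℕ):ℤ) := by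
      have hpz : ((p:ℕ):ℤ) < (t:ℤ) := by exact_mod_cast hpt
      have := natpos hp0
      rw [hx, Equiv.Perm.mul_apply,
        wSp_fix ht0 (x := ((p:ℕ):ℤ)) (by omega) (by omega) (by omega) (by omega)]
    have hxt : x ((t:ℕ):ℤ) = w ((t+1:ℕ):ℤ) := by
      rw [hx, Equiv.Perm.mul_apply, wSp_p ht0, e1]
    have hxt1 : x ((t:ℤ)+1) = w ((t:ℕ):ℤ) := by
      rw [hx, Equiv.Perm.mul_apply, wSp_p1 ht0]
    have hxh : ∀ h : ℕ, h ≠ 0 → h < t → x ((h:ℕ):ℤ) = w ((h:ℕ):ℤ) := by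
      intro h h0 hht
      have hhz : ((h:ℕ):ℤ) < (t:ℤ) := by exact_mod_cast hht
      have := natpos h0
      rw [hx, Equiv.Perm.mul_apply,
        wSp_fix ht0 (x := ((h:ℕ):ℤ)) (by omega) (by omega) (by omega) (by omega)]
    have hIH : phi (x * tb p t) = phi x + 1 := by
      apply ih (p + t) (by omega) x p t N P hWx hp0 hpt rfl
      · rw [hxp, hxt]; exact hNP
      · exact hN
      · exact hNltP
      · intro h h0 hhp
        rw [hxh h h0 (by omega)]
        exact hI h h0 hhp
      · intro h hph hht
        rw [hxp, hxh h (by omega) hht, hxt]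
        exact hII h hph (by omega)
    set y := x * tb p t with hy
    have hWy : InWinf y := inWinf_mul_tb hWx p t hp0 ht0
    have hyt : y ((t:ℕ):ℤ) = -(w ((p:ℕ):ℤ)) := by
      rw [hy, Equiv.Perm.mul_apply, tb_at_q hp0 ht0 (by omega), hWx.1, hxp]
    have hyt1 : y ((t:ℤ)+1) = w ((t:ℕ):ℤ) := by
      have := natpos hp0
      have := natpos ht0
      have hpz : ((p:ℕ):ℤ) < (t:ℤ) := by exact_mod_cast hpt
      rw [hy, Equiv.Perm.mul_apply,
        tb_fix hp0 ht0 (by omega) (x := (t:ℤ)+1) (by omega) (by omega) (by omega) (by omega),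
        hxt1]
    have hfinal : y * wS t = w * tb p (t+1) := by
      rw [hy, hx, conj_tb_right hp0 hpt]
      group
    by_cases hd : w ((t:ℕ):ℤ) < w ((t+1:ℕ):ℤ)
    · -- ascent at t first
      have hasc : ¬ Descent w t := by
        unfold Descent
        rw [if_neg ht0]
        rw [← e1]
        omega
      have e2 : phi x = phi w + 1 := phi_wS_ascent hW hasc
      have hdlt : w ((t:ℕ):ℤ) < -(w ((p:ℕ):ℤ)) := by
        rcases hIIt with h
        omega
      have hdes : Descent y t := by
        unfold Descent
        rw [if_neg ht0, hyt1]
        have := hyt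
        omega
      have e3 : phi y = phi (y * wS t) + 1 := phi_wS_descent hWy hdes
      rw [hfinal] at e3
      omega
    · have hdgt : w ((t+1:ℕ):ℤ) < w ((t:ℕ):ℤ) := by omega
      have hdes : Descent w t := by
        unfold Descent
        rw [if_neg ht0, ← e1]
        omega
      have e2 : phi w = phi x + 1 := phi_wS_descent hW hdes
      have hasc : ¬ Descent y t := by
        unfold Descent
        rw [if_neg ht0, hyt1]
        have := hyt
        rcases hNP with ⟨h1, h2⟩ | ⟨h1, h2⟩ <;> omega
      have e3 : phi (y * wS t) = phi y + 1 := phi_wS_ascent hWy hasc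
      rw [hfinal] at e3
      omega
  · have hqp1 : q = p + 1 := by omega
    by_cases hp1 : p = 1
    · -- base case (p, q) = (1, 2)
      subst hp1
      have hq2 : q = 2 := by omega
      subst hq2
      have c1 : (((1:ℕ)):ℤ) = 1 := by norm_num
      have c2 : (((2:ℕ)):ℤ) = 2 := by norm_num
      rw [c1] at hNP hII
      rw [c2] at hNP
      have wS0_2 : wS 0 (2:ℤ) = 2 := by rw [wS_apply_zero]; norm_num
      have wS1_1 : wS 1 (1:ℤ) = 2 := by
        have := wSp_p (p := 1) (by omega)
        norm_num at this
        convert this using 2 <;> norm_num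
      have wS1_2 : wS 1 (2:ℤ) = 1 := by
        have := wSp_p1 (p := 1) (by omega)
        norm_num at this
        convert this using 2 <;> norm_num
      set x1 := w * wS 0 with hx1
      have hWx1 : InWinf x1 := inWinf_mul_wS hW 0
      have hx1_1 : x1 (1:ℤ) = -(w 1) := by
        rw [hx1, Equiv.Perm.mul_apply, wS0_one, hW.1 1]
      have hx1_2 : x1 (2:ℤ) = w 2 := by
        rw [hx1, Equiv.Perm.mul_apply, wS0_2]
      set x2 := x1 * wS 1 with hx2
      have hWx2 : InWinf x2 := inWinf_mul_wS hWx1 1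
      have hx2_1 : x2 (1:ℤ) = w 2 := by
        rw [hx2, Equiv.Perm.mul_apply, wS1_1, hx1_2]
      have hx2_2 : x2 (2:ℤ) = -(w 1) := by
        rw [hx2, Equiv.Perm.mul_apply, wS1_2, hx1_1]
      have hfinal : x2 * wS 0 = w * tb 1 2 := by
        rw [hx2, hx1, conj_tb_base]
        group
      have hdes0_iff : ∀ u : Equiv.Perm ℤ, Descent u 0 ↔ u 1 < 0 := by
        intro u
        unfold Descent
        norm_num
      have hdes1_iff : ∀ u : Equiv.Perm ℤ, Descent u 1 ↔ u 2 < u 1 := by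
        intro u
        unfold Descent
        norm_num
      rcases hNP with ⟨h1, h2⟩ | ⟨h1, h2⟩
      · -- w 1 = -N < 0
        have e1 : phi w = phi x1 + 1 :=
          phi_wS_descent hW (by rw [hdes0_iff]; omega)
        have e2 : phi x2 = phi x1 + 1 := by
          have : ¬ Descent x1 1 := by
            rw [hdes1_iff, hx1_1, hx1_2]
            omega
          have := phi_wS_ascent hWx1 this
          rw [← hx2] at this
          exact this
        have e3 : phi (x2 * wS 0) = phi x2 + 1 :=
          phi_wS_ascent hWx2 (by rw [hdes0_iff, hx2_1]; omega)
        rw [hfinal] at e3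
        omega
      · -- w 1 = P > 0
        have e1 : phi x1 = phi w + 1 :=
          phi_wS_ascent hW (by rw [hdes0_iff]; omega)
        have e2 : phi x2 = phi x1 + 1 := by
          have : ¬ Descent x1 1 := by
            rw [hdes1_iff, hx1_1, hx1_2]
            omega
          have := phi_wS_ascent hWx1 this
          rw [← hx2] at this
          exact this
        have e3 : phi x2 = phi (x2 * wS 0) + 1 :=
          phi_wS_descent hWx2 (by rw [hdes0_iff, hx2_1]; omega)
        rw [hfinal] at e3
        omega
    · -- reduce p
      obtain ⟨t, rfl⟩ : ∃ t, p = t + 1 := ⟨p - 1, by omega⟩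
      have ht0 : t ≠ 0 := by omega
      have e1 : ((t+1:ℕ):ℤ) = (t:ℤ)+1 := by push_cast; ring
      have hIt := hI t ht0 (by omega)
      have htq : t + 1 < q := by omega
      have hq0 : q ≠ 0 := by omega
      have hdnea : w ((t:ℕ):ℤ) ≠ w ((t+1:ℕ):ℤ) := by
        intro hcon
        have := w.injective hcon
        omega
      have hdneb : w ((t:ℕ):ℤ) ≠ -(w ((q:ℕ):ℤ)) := by
        intro hcon
        have h2 : w (-((q:ℕ):ℤ)) = -(w ((q:ℕ):ℤ)) := hW.1 _
        rw [← hcon] at h2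
        have h3 := w.injective h2
        have := natpos hq0
        have := natpos ht0
        omega
      set x := w * wS t with hx
      have hWx : InWinf x := inWinf_mul_wS hW t
      have hxt : x ((t:ℕ):ℤ) = w ((t+1:ℕ):ℤ) := by
        rw [hx, Equiv.Perm.mul_apply, wSp_p ht0, e1]
      have hxp : x ((t+1:ℕ):ℤ) = w ((t:ℕ):ℤ) := by
        rw [hx, Equiv.Perm.mul_apply, e1, wSp_p1 ht0]
      have hxq : x ((q:ℕ):ℤ) = w ((q:ℕ):ℤ) := by
        have hqz : ((t:ℤ))+1 < ((q:ℕ):ℤ) := by exact_mod_cast htq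
        have := natpos hq0
        rw [hx, Equiv.Perm.mul_apply,
          wSp_fix ht0 (x := ((q:ℕ):ℤ)) (by omega) (by omega) (by omega) (by omega)]
      have hxh : ∀ h : ℕ, h ≠ 0 → h < t → x ((h:ℕ):ℤ) = w ((h:ℕ):ℤ) := by
        intro h h0 hht
        have hhz : ((h:ℕ):ℤ) < (t:ℤ) := by exact_mod_cast hht
        have := natpos h0
        rw [hx, Equiv.Perm.mul_apply,
          wSp_fix ht0 (x := ((h:ℕ):ℤ)) (by omega) (by omega) (by omega) (by omega)]
      have hxh2 : ∀ h : ℕ, t + 1 < h → h < q → x ((h:ℕ):ℤ) = w ((h:ℕ):ℤ) := by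
        intro h h0 hht
        have hhz : ((t:ℤ))+1 < ((h:ℕ):ℤ) := by exact_mod_cast h0
        rw [hx, Equiv.Perm.mul_apply,
          wSp_fix ht0 (x := ((h:ℕ):ℤ)) (by omega) (by omega) (by omega) (by omega)]
      have hIH : phi (x * tb t q) = phi x + 1 := by
        apply ih (t + q) (by omega) x t q N P hWx ht0 (by omega) rfl
        · rw [hxt, hxq]; exact hNP
        · exact hN
        · exact hNltP
        · intro h h0 hht
          rw [hxh h h0 hht]
          exact hI h h0 (by omega)
        · intro h hth hhq
          rcases Nat.lt_or_ge (t+1) h with hc | hc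
          · rw [hxt, hxh2 h hc hhq, hxq]
            exact hII h (by omega) hhq
          · have hh : h = t + 1 := by omega
            subst hh
            rw [hxt, hxp, hxq]
            rcases hNP with ⟨h1, h2⟩ | ⟨h1, h2⟩
            · rw [h1, h2]
              have := hIt.1
              omega
            · rw [h1, h2]
              have := hIt.2
              omega
      set y := x * tb t q with hy
      have hWy : InWinf y := inWinf_mul_tb hWx t q ht0 hq0
      have hyt : y ((t:ℕ):ℤ) = -(w ((q:ℕ):ℤ)) := by
        rw [hy, Equiv.Perm.mul_apply, tb_at_p ht0 hq0 (by omega), hWx.1, hxq]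
      have hyt1 : y ((t:ℤ)+1) = w ((t:ℕ):ℤ) := by
        have := natpos ht0
        have := natpos hq0
        have hqz : ((t:ℤ))+1 < ((q:ℕ):ℤ) := by exact_mod_cast htq
        rw [hy, Equiv.Perm.mul_apply,
          tb_fix ht0 hq0 (by omega) (x := (t:ℤ)+1) (by omega) (by omega) (by omega) (by omega)]
        rw [← e1, hxp]
      have hfinal : y * wS t = w * tb (t+1) q := by
        rw [hy, hx, conj_tb_left ht0 htq]
        group
      by_cases hd : w ((t:ℕ):ℤ) < w ((t+1:ℕ):ℤ)
      · -- ascent at t first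
        have hasc : ¬ Descent w t := by
          unfold Descent
          rw [if_neg ht0, ← e1]
          omega
        have e2 : phi x = phi w + 1 := phi_wS_ascent hW hasc
        have hdlt : w ((t:ℕ):ℤ) < -(w ((q:ℕ):ℤ)) := by
          rcases hNP with ⟨h1, h2⟩ | ⟨h1, h2⟩
          · rw [h1] at hd
            rw [h2]
            have := hIt.2
            omega
          · rw [h1] at hd
            rw [h2]
            have := hIt.1
            omega
        have hdes : Descent y t := by
          unfold Descent
          rw [if_neg ht0, hyt1]
          have := hyt
          omega
        have e3 : phi y = phi (y * wS t) + 1 := phi_wS_descent hWy hdes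
        rw [hfinal] at e3
        omega
      · have hdes : Descent w t := by
          unfold Descent
          rw [if_neg ht0, ← e1]
          omega
        have e2 : phi w = phi x + 1 := phi_wS_descent hW hdes
        have hasc : ¬ Descent y t := by
          unfold Descent
          rw [if_neg ht0, hyt1]
          have h5 := hyt
          rcases hNP with ⟨h1, h2⟩ | ⟨h1, h2⟩ <;> [rw [h1] at hd; rw [h1] at hd] <;> omega
        have e3 : phi (y * wS t) = phi y + 1 := phi_wS_ascent hWy hasc
        rw [hfinal] at e3
        omega

theorem transition_set_nonempty (k : ℕ) (w : Equiv.Perm ℤ) (hW : InWinf w)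
    (hinc : IncUpTo k w) (hng : ¬ kGrass k w) (r s : ℕ)
    (hrd : Descent w r) (hrlast : ∀ p : ℕ, r < p → ¬ Descent w p) (hrk : k < r)
    (hs1 : r < s) (hs2 : w (s : ℤ) < w (r : ℤ))
    (hs3 : ∀ j : ℕ, s < j → ¬ (w (j : ℤ) < w (r : ℤ))) :
    (Phi w r s).Nonempty := by
  have hr0 : r ≠ 0 := by omega
  have hs0 : s ≠ 0 := by omega
  have hrs : r ≠ s := by omega
  have hr1 := natpos hr0
  have hs1' := natpos hs0
  have hWv : InWinf (w * tt r s) := inWinf_mul_tt hW r s hr0 hs0 hrs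
  set v := w * tt r s with hv
  have hvr : v ((r:ℕ):ℤ) = w ((s:ℕ):ℤ) := by
    rw [hv, Equiv.Perm.mul_apply, tt_at_p hr0 hs0 hrs]
  have hvs : v ((s:ℕ):ℤ) = w ((r:ℕ):ℤ) := by
    rw [hv, Equiv.Perm.mul_apply, tt_at_q hr0 hs0 hrs]
  have hvother : ∀ h : ℕ, h ≠ 0 → h ≠ r → h ≠ s → v ((h:ℕ):ℤ) = w ((h:ℕ):ℤ) := by
    intro h h0 h1 h2
    have := natpos h0
    have e1 : ((h:ℕ):ℤ) ≠ ((r:ℕ):ℤ) := by exact_mod_cast h1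
    have e2 : ((h:ℕ):ℤ) ≠ ((s:ℕ):ℤ) := by exact_mod_cast h2
    rw [hv, Equiv.Perm.mul_apply,
      tt_fix hr0 hs0 hrs (x := ((h:ℕ):ℤ)) (by omega) (by omega) (by omega) (by omega)]
  -- increasing after r
  have hinc2 : ∀ j : ℕ, r < j → w (j:ℤ) < w ((j:ℤ)+1) := by
    intro j hj
    have hj0 : j ≠ 0 := by omega
    have := not_descent_lt hW (hrlast j hj)
    rwa [if_neg hj0] at this
  have hchain : ∀ d : ℕ, ∀ h : ℕ, r < h → w (h:ℤ) < w ((h + d + 1 : ℕ):ℤ) := by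
    intro d
    induction d with
    | zero =>
        intro h hh
        have := hinc2 h hh
        have e : ((h + 0 + 1 : ℕ):ℤ) = (h:ℤ)+1 := by push_cast; ring
        rwa [e]
    | succ e ihe =>
        intro h hh
        have h1 := ihe h hh
        have h2 := hinc2 (h+e+1) (by omega)
        have e2 : ((h + (e+1) + 1 : ℕ):ℤ) = ((h+e+1:ℕ):ℤ)+1 := by push_cast; ring
        rw [e2]
        omega
  have hmid : ∀ h : ℕ, r < h → h < s → w (h:ℤ) < w (s:ℤ) := by
    intro h h1 h2
    have e : h + (s - h - 1) + 1 = s := by omega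
    have := hchain (s - h - 1) h h1
    rwa [e] at this
  -- phi w = phi v + 1
  have hvtt : v * tt r s = w := by
    rw [hv, mul_assoc, tt_invol r s hr0 hs0 hrs, mul_one]
  have hphiv : phi w = phi v + 1 := by
    rw [← hvtt]
    apply phi_tt_cover (s - r - 1) v r s hWv hr0 (by omega)
    · rw [hvr, hvs]; exact hs2
    · intro h h1 h2
      rw [hvr, hvs, hvother h (by omega) (by omega) (by omega)]
      have := hmid h h1 h2
      omega
  by_cases hc1 : ∃ i : ℕ, i ≠ 0 ∧ i < r ∧ v (i:ℤ) < v (r:ℤ)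
  · -- Case 1 : Φ₁ witness
    set F := (Finset.Ico 1 r).filter (fun i : ℕ => v ((i:ℕ):ℤ) < v ((r:ℕ):ℤ)) with hF
    have hmemF : ∀ i : ℕ, i ∈ F ↔ (1 ≤ i ∧ i < r) ∧ v (i:ℤ) < v (r:ℤ) := by
      intro i
      rw [hF, Finset.mem_filter, Finset.mem_Ico]
    have hFne : F.Nonempty := by
      obtain ⟨i, h0, h1, h2⟩ := hc1
      exact ⟨i, (hmemF i).mpr ⟨⟨by omega, h1⟩, h2⟩⟩
    obtain ⟨i₀, hi₀F, hi₀max⟩ := Finset.exists_max_image F (fun i => v (i:ℤ)) hFne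
    rw [hmemF] at hi₀F
    obtain ⟨⟨hi₀1, hi₀r⟩, hi₀lt⟩ := hi₀F
    have hi00 : i₀ ≠ 0 := by omega
    have hcov : phi (v * tt i₀ r) = phi v + 1 := by
      apply phi_tt_cover (r - i₀ - 1) v i₀ r hWv hi00 (by omega) hi₀lt
      intro h h1 h2
      intro ⟨ha, hb⟩
      have hhF : h ∈ F := (hmemF h).mpr ⟨⟨by omega, h2⟩, hb⟩
      have := hi₀max h hhF
      omega
    refine ⟨w * tt r s * tt i₀ r, Or.inl ⟨i₀, by omega, hi₀r, ?_, rfl⟩⟩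
    have hWfull : InWinf (w * tt r s * tt i₀ r) :=
      inWinf_mul_tt hWv i₀ r hi00 hr0 (by omega)
    rw [len_eq_phi hWfull, len_eq_phi hW]
    rw [← hv]
    omega
  · push_neg at hc1
    have hcase2 : ∀ h : ℕ, h ≠ 0 → h < r → v (r:ℤ) < v (h:ℤ) := by
      intro h h0 hhr
      have h1 := hc1 h h0 hhr
      have hne : v ((h:ℕ):ℤ) ≠ v ((r:ℕ):ℤ) := by
        intro hcon
        have := v.injective hcon
        have := natpos h0
        omega
      omega
    have hvr0 : v ((r:ℕ):ℤ) ≠ 0 := odd_ne_zero hWv.1 (by omega : ((r:ℕ):ℤ) ≠ 0)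
    by_cases hpos : 0 < v ((r:ℕ):ℤ)
    · -- Case 2a : sign change at r
      have hcov : phi (v * tb r r) = phi v + 1 := by
        apply phi_tbrr_cover r v hWv hr0 hpos
        intro a a0 har
        have := hcase2 a a0 har
        omega
      refine ⟨w * tt r s * tb r r, Or.inr ⟨r, by omega, ?_, rfl⟩⟩
      have hWfull : InWinf (w * tt r s * tb r r) := inWinf_mul_tb hWv r r hr0 hr0
      rw [len_eq_phi hWfull, len_eq_phi hW]
      rw [← hv]
      omega
    · -- Case 2b : v_r = -c with c > 0
      have hcneg : v ((r:ℕ):ℤ) < 0 := by omega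
      obtain ⟨hoddv, nv, hsv⟩ := hWv
      set c : ℤ := -(v ((r:ℕ):ℤ)) with hc
      have hcpos : 0 < c := by omega
      -- find the minimal value exceeding c among positive positions
      have hinh : ∃ m : ℤ, c < m ∧ ∃ i : ℕ, i ≠ 0 ∧ v (i:ℤ) = m := by
        refine ⟨((nv + c.toNat + 1 : ℕ):ℤ), ?_, ⟨nv + c.toNat + 1, by omega, ?_⟩⟩
        · push_cast
          omega
        · apply hsv
          rw [abs_of_pos (by push_cast; omega)]
          push_cast
          omega
      obtain ⟨m₀, ⟨hm₀c, i₀, hi₀0, hi₀v⟩, hm₀min⟩ :=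
        Int.exists_least_of_bdd (P := fun m => c < m ∧ ∃ i : ℕ, i ≠ 0 ∧ v (i:ℤ) = m)
          ⟨c, fun z hz => le_of_lt hz.1⟩ hinh
      have hir : i₀ ≠ r := by
        intro hcon
        rw [hcon] at hi₀v
        omega
      have hmin' : ∀ h : ℕ, h ≠ 0 → c < v (h:ℤ) → m₀ ≤ v (h:ℤ) := by
        intro h h0 hch
        exact hm₀min _ ⟨hch, h, h0, rfl⟩
      have hWvb : InWinf v := ⟨hoddv, nv, hsv⟩
      have hcov : phi (v * tb i₀ r) = phi v + 1 := by
        rcases Nat.lt_or_ge i₀ r with hlt | hge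
        · apply phi_tb_cover (i₀ + r) v i₀ r c m₀ hWvb hi₀0 hlt rfl ?_ hcpos hm₀c ?_ ?_
          · right
            exact ⟨hi₀v, by omega⟩
          · intro h h0 hhi
            constructor
            · intro ⟨ha, hb⟩
              have := hmin' h h0 ha
              omega
            · intro ⟨ha, hb⟩
              have := hcase2 h h0 (by omega)
              omega
          · intro h h1 h2
            intro ⟨ha, hb⟩
            have := hcase2 h (by omega) h2
            omega
        · have hgt : r < i₀ := by omega
          have heq : v * tb i₀ r = v * tb r i₀ := by
            rw [tb_comm i₀ r hi₀0 hr0 (by omega)]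
          rw [heq]
          apply phi_tb_cover (r + i₀) v r i₀ c m₀ hWvb hr0 hgt rfl ?_ hcpos hm₀c ?_ ?_
          · left
            exact ⟨by omega, hi₀v⟩
          · intro h h0 hhr
            constructor
            · intro ⟨ha, hb⟩
              have := hmin' h h0 ha
              omega
            · intro ⟨ha, hb⟩
              have := hcase2 h h0 hhr
              omega
          · intro h h1 h2
            intro ⟨ha, hb⟩
            rw [hi₀v] at hb
            have := hmin' h (by omega) (by omega)
            omega
      refine ⟨w * tt r s * tb i₀ r, Or.inr ⟨i₀, by omega, ?_, rfl⟩⟩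
      have hWfull : InWinf (w * tt r s * tb i₀ r) := inWinf_mul_tb ⟨hoddv, nv, hsv⟩ i₀ r hi₀0 hr0
      rw [len_eq_phi hWfull, len_eq_phi hW]
      rw [← hv]
      omega


end Giambelli
end
end
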